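/- arXiv:1502.05150 — 10 statements merged into one kernel-verified Lean document; each statement's English description precedes it below -/
import Mathlib

section
/- Let A(z) = Σ_{i≥0} (6i)!/((3i)!(2i)!) (z/288)^i and B(z) = Σ_{i≥0} ((6i)!/((3i)!(2i)!))·((6i+1)/(6i−1)) (z/288)^i, viewed as formal power series over ℚ. Then 3z²·(dA/dz) + (z/2 − 1)·A = B in ℚ[[z]]. -/
open PowerSeries

/-- The hypergeometric series `A(z) = Σ_{i≥0} (6i)!/((3i)!(2i)!) (z/288)^i`. -/
noncomputable def seriesA : PowerSeries ℚ :=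
  PowerSeries.mk fun i => ((6 * i).factorial : ℚ) / ((3 * i).factorial * (2 * i).factorial) *
    (1 / 288) ^ i

/-- The hypergeometric series
`B(z) = Σ_{i≥0} (6i)!/((3i)!(2i)!) · (6i+1)/(6i−1) · (z/288)^i`. -/
noncomputable def seriesB : PowerSeries ℚ :=
  PowerSeries.mk fun i => ((6 * i).factorial : ℚ) / ((3 * i).factorial * (2 * i).factorial) *
    ((6 * (i : ℚ) + 1) / (6 * (i : ℚ) - 1)) * (1 / 288) ^ i

theorem FZ_first_order_ODE :
    3 * X ^ 2 * (PowerSeries.derivative ℚ seriesA) +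
      (C (1 / 2 : ℚ) * X - 1) * seriesA = seriesB := by
  rw [show 3 * X ^ 2 * (PowerSeries.derivative ℚ seriesA) +
      (C (1 / 2 : ℚ) * X - 1) * seriesA
      = X^2 * (C (3 : ℚ) * PowerSeries.derivative ℚ seriesA)
        + (X * (C (1/2 : ℚ) * seriesA) - seriesA) by
    rw [show (C (3 : ℚ)) = (3 : ℚ⟦X⟧) from map_ofNat _ 3]; ring]
  ext n
  rw [map_add, map_sub, coeff_X_pow_mul']
  match n with
  | 0 => simp [seriesA, seriesB]
  | 1 =>
    rw [coeff_succ_X_mul]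
    simp [seriesA, seriesB, Nat.factorial]
    norm_num
  | (k+2) =>
    rw [coeff_succ_X_mul, if_pos (by omega), coeff_C_mul, coeff_C_mul, coeff_derivative]
    simp only [seriesA, seriesB, coeff_mk]
    have e : ∀ j : ℕ, (j+1).factorial = (j+1) * j.factorial := Nat.factorial_succ
    have h6 : (6*(k+2)).factorial =
        (6*(k+1)+6)*((6*(k+1)+5)*((6*(k+1)+4)*((6*(k+1)+3)*((6*(k+1)+2)*((6*(k+1)+1)*(6*(k+1)).factorial))))) := by
      rw [show 6*(k+2) = 6*(k+1)+5+1 by ring, e, show 6*(k+1)+5 = 6*(k+1)+4+1 by ring, e,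
        show 6*(k+1)+4 = 6*(k+1)+3+1 by ring, e, show 6*(k+1)+3 = 6*(k+1)+2+1 by ring, e,
        show 6*(k+1)+2 = 6*(k+1)+1+1 by ring, e, show 6*(k+1)+1 = 6*(k+1)+0+1 by ring, e]
    have h3 : (3*(k+2)).factorial =
        (3*(k+1)+3)*((3*(k+1)+2)*((3*(k+1)+1)*(3*(k+1)).factorial)) := by
      rw [show 3*(k+2) = 3*(k+1)+2+1 by ring, e, show 3*(k+1)+2 = 3*(k+1)+1+1 by ring, e,
        show 3*(k+1)+1 = 3*(k+1)+0+1 by ring, e]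
    have h2 : (2*(k+2)).factorial = (2*(k+1)+2)*((2*(k+1)+1)*(2*(k+1)).factorial) := by
      rw [show 2*(k+2) = 2*(k+1)+1+1 by ring, e, show 2*(k+1)+1 = 2*(k+1)+0+1 by ring, e]
    rw [show k+2-2 = k from rfl, h6, h3, h2]
    have ha : ((6*(k+1)).factorial : ℚ) ≠ 0 := Nat.cast_ne_zero.mpr (Nat.factorial_ne_zero _)
    have hb : ((3*(k+1)).factorial : ℚ) ≠ 0 := Nat.cast_ne_zero.mpr (Nat.factorial_ne_zero _)
    have hc : ((2*(k+1)).factorial : ℚ) ≠ 0 := Nat.cast_ne_zero.mpr (Nat.factorial_ne_zero _)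
    have hk : (0:ℚ) ≤ (k:ℚ) := Nat.cast_nonneg k
    push_cast
    have hd : 6 * ((k:ℚ)+2) - 1 ≠ 0 := by intro h; linarith
    field_simp
    ring
end

section
/- Let A(z) = Σ_{i≥0} (6i)!/((3i)!(2i)!) (z/288)^i as a formal power series over ℚ. Then A satisfies the hypergeometric differential equation 3z²·(d²A/dz²) + (6z − 2)·(dA/dz) + (5/12)·A = 0 in ℚ[[z]]. -/
open PowerSeries

noncomputable def aQ (n : ℕ) : ℚ :=
  ((6 * n).factorial : ℚ) / ((3 * n).factorial * (2 * n).factorial) * (1 / 288) ^ n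

lemma key (n : ℕ) : aQ (n + 1) * (2 * (n + 1)) = (3 * (n : ℚ) ^ 2 + 3 * n + 5 / 12) * aQ n := by
  have h6 : ((6 * (n + 1)).factorial : ℚ) =
      (6*n+6) * ((6*n+5) * ((6*n+4) * ((6*n+3) * ((6*n+2) * ((6*n+1) * (6*n).factorial))))) := by
    rw [show 6*(n+1) = (6*n+5)+1 by ring, Nat.factorial_succ,
      show 6*n+5 = (6*n+4)+1 by ring, Nat.factorial_succ,
      show 6*n+4 = (6*n+3)+1 by ring, Nat.factorial_succ,
      show 6*n+3 = (6*n+2)+1 by ring, Nat.factorial_succ,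
      show 6*n+2 = (6*n+1)+1 by ring, Nat.factorial_succ,
      show 6*n+1 = (6*n)+1 by ring, Nat.factorial_succ]
    push_cast; ring
  have h3 : ((3 * (n + 1)).factorial : ℚ) =
      (3*n+3) * ((3*n+2) * ((3*n+1) * (3*n).factorial)) := by
    rw [show 3*(n+1) = (3*n+2)+1 by ring, Nat.factorial_succ,
      show 3*n+2 = (3*n+1)+1 by ring, Nat.factorial_succ,
      show 3*n+1 = (3*n)+1 by ring, Nat.factorial_succ]
    push_cast; ring
  have h2 : ((2 * (n + 1)).factorial : ℚ) =
      (2*n+2) * ((2*n+1) * (2*n).factorial) := by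
    rw [show 2*(n+1) = (2*n+1)+1 by ring, Nat.factorial_succ,
      show 2*n+1 = (2*n)+1 by ring, Nat.factorial_succ]
    push_cast; ring
  have f3 : ((3 * n).factorial : ℚ) ≠ 0 := Nat.cast_ne_zero.mpr (Nat.factorial_ne_zero _)
  have f2 : ((2 * n).factorial : ℚ) ≠ 0 := Nat.cast_ne_zero.mpr (Nat.factorial_ne_zero _)
  unfold aQ
  rw [h6, h3, h2, pow_succ]
  field_simp
  ring

theorem FZ_hypergeometric_ODE :
    3 * X ^ 2 * (PowerSeries.derivative ℚ (PowerSeries.derivative ℚ seriesA)) +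
      (6 * X - 2) * (PowerSeries.derivative ℚ seriesA) + C (5 / 12 : ℚ) * seriesA = 0 := by
  set D1 := PowerSeries.derivative ℚ seriesA with hD1
  set D2 := PowerSeries.derivative ℚ D1 with hD2
  have hre : 3 * X ^ 2 * D2 + (6 * X - 2) * D1 + C (5/12 : ℚ) * seriesA
      = X * (X * (C (3 : ℚ) * D2)) + X * (C (6 : ℚ) * D1) - C (2 : ℚ) * D1 + C (5/12 : ℚ) * seriesA := by
    have h3 : (3 : PowerSeries ℚ) = C (3 : ℚ) := (map_ofNat (C (R := ℚ)) 3).symm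
    have h6 : (6 : PowerSeries ℚ) = C (6 : ℚ) := (map_ofNat (C (R := ℚ)) 6).symm
    have h2 : (2 : PowerSeries ℚ) = C (2 : ℚ) := (map_ofNat (C (R := ℚ)) 2).symm
    rw [h3, h6, h2]; ring
  rw [hre]
  ext n
  have hA : ∀ k, coeff k seriesA = aQ k := fun k => by simp [seriesA, aQ]
  have hd1 : ∀ k, coeff k D1 = aQ (k+1) * (k+1) := fun k => by
    rw [hD1, coeff_derivative, hA]
  have hd2 : ∀ k, coeff k D2 = aQ (k+2) * (k+2) * (k+1) := fun k => by
    rw [hD2, coeff_derivative, hd1]; push_cast; ring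
  simp only [map_add, map_sub, map_zero, coeff_C_mul]
  match n with
  | 0 =>
    rw [coeff_zero_X_mul, coeff_zero_X_mul, hd1, hA]
    have := key 0
    simp only [aQ] at this ⊢
    push_cast at this ⊢
    nlinarith [this]
  | 1 =>
    rw [coeff_succ_X_mul, coeff_zero_X_mul, coeff_succ_X_mul, coeff_C_mul, hd1, hd1, hA]
    have := key 1
    push_cast at this ⊢
    nlinarith [this]
  | (m+2) =>
    rw [coeff_succ_X_mul, coeff_succ_X_mul, coeff_succ_X_mul, coeff_C_mul, coeff_C_mul,
      hd2, hd1, hd1, hA]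
    have := key (m+2)
    push_cast at this ⊢
    nlinarith [this]
end

section
/- Let H₀(T) = Σ_{i≥0} (6i)!/((2i)!(3i)!) (−T)^i and H₁(T) = −Σ_{i≥0} ((6i)!/((2i)!(3i)!))·((6i+1)/(6i−1)) (−T)^i as formal power series over ℚ. Then H₀(T)·H₁(−T) + H₀(−T)·H₁(T) = 2 in ℚ[[T]]. -/
open PowerSeries


noncomputable def auxA : ℕ → ℚ := fun i =>
  ((6 * i).factorial : ℚ) / ((2 * i).factorial * (3 * i).factorial)

lemma auxA_pos (i : ℕ) : 0 < auxA i := by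
  unfold auxA
  have h1 : (0:ℚ) < ((6*i).factorial : ℚ) := by exact_mod_cast (6*i).factorial_pos
  have h2 : (0:ℚ) < ((2*i).factorial : ℚ) := by exact_mod_cast (2*i).factorial_pos
  have h3 : (0:ℚ) < ((3*i).factorial : ℚ) := by exact_mod_cast (3*i).factorial_pos
  positivity

lemma auxA_ne (i : ℕ) : auxA i ≠ 0 := (auxA_pos i).ne'

lemma auxA_zero : auxA 0 = 1 := by simp [auxA]

lemma auxA_def (i : ℕ) :
    ((6 * i).factorial : ℚ) / ((2 * i).factorial * (3 * i).factorial) = auxA i := rfl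

lemma fact_six (k : ℕ) : ((6*(k+1)).factorial : ℚ) =
    (6*k).factorial * ((6*k+1)*(6*k+2)*(6*k+3)*(6*k+4)*(6*k+5)*(6*k+6)) := by
  have h : 6*(k+1) = 6*k+1+1+1+1+1+1 := by ring
  rw [h]
  push_cast [Nat.factorial_succ]
  ring

lemma fact_two (k : ℕ) : ((2*(k+1)).factorial : ℚ) =
    (2*k).factorial * ((2*k+1)*(2*k+2)) := by
  have h : 2*(k+1) = 2*k+1+1 := by ring
  rw [h]
  push_cast [Nat.factorial_succ]
  ring

lemma fact_three (k : ℕ) : ((3*(k+1)).factorial : ℚ) =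
    (3*k).factorial * ((3*k+1)*(3*k+2)*(3*k+3)) := by
  have h : 3*(k+1) = 3*k+1+1+1 := by ring
  rw [h]
  push_cast [Nat.factorial_succ]
  ring

lemma auxA_succ (k : ℕ) :
    auxA (k+1) * ((k:ℚ)+1) = auxA k * (12 * (6*(k:ℚ)+1) * (6*(k:ℚ)+5)) := by
  unfold auxA
  rw [fact_six, fact_two, fact_three]
  have h1 : ((6*k).factorial : ℚ) ≠ 0 := by exact_mod_cast (6*k).factorial_ne_zero
  have h2 : ((2*k).factorial : ℚ) ≠ 0 := by exact_mod_cast (2*k).factorial_ne_zero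
  have h3 : ((3*k).factorial : ℚ) ≠ 0 := by exact_mod_cast (3*k).factorial_ne_zero
  field_simp
  ring

lemma auxA_succ' (k : ℕ) :
    auxA (k+1) = auxA k * (12 * (6*(k:ℚ)+1) * (6*(k:ℚ)+5)) / ((k:ℚ)+1) := by
  rw [eq_div_iff (by positivity)]
  exact auxA_succ k

lemma six_sub_one_ne (i : ℕ) : (6*(i:ℚ) - 1) ≠ 0 := by
  intro h
  have h1 : ((6*i : ℕ) : ℚ) = 1 := by push_cast; linarith
  have h2 : 6*i = 1 := by exact_mod_cast h1
  omega

/-- `E i j = -2 A_i A_j (6j+1)/(6j-1) (-1)^i`. -/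
noncomputable def auxE (i j : ℕ) : ℚ :=
  (-2 * auxA i * auxA j * (6*(j:ℚ)+1) * (-1)^i) / (6*(j:ℚ)-1)

/-- Telescoping certificate. -/
noncomputable def auxh (n i : ℕ) : ℚ :=
  (4 * (-1)^i * auxA i * auxA (n-i) * (i:ℚ) * (6*(n:ℚ)-6*(i:ℚ)+1)) / ((n:ℚ)*(6*(i:ℚ)-1))

set_option maxHeartbeats 2000000 in
lemma tel (n i : ℕ) (hi : i < n) (he : Even n) :
    auxE i (n-i) + auxE (n-i) i = auxh n (i+1) - auxh n i := by
  obtain ⟨j, e1, e2⟩ : ∃ j, n - i = j + 1 ∧ n - (i+1) = j := ⟨n - i - 1, by omega, by omega⟩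
  have hnq : (n:ℚ) = (i:ℚ) + (j:ℚ) + 1 := by
    have : n = i + j + 1 := by omega
    exact_mod_cast this
  unfold auxE auxh
  rw [e1, e2, auxA_succ' i, auxA_succ' j, hnq]
  have hpar : (-1:ℚ)^j = -(-1:ℚ)^i := by
    rcases Nat.even_or_odd i with hp | hp
    · have hpj : Odd j := by
        rw [Nat.even_iff] at hp he; rw [Nat.odd_iff]; omega
      simp [hp.neg_one_pow, hpj.neg_one_pow]
    · have hpj : Even j := by
        rw [Nat.odd_iff] at hp; rw [Nat.even_iff] at he ⊢; omega
      simp [hp.neg_one_pow, hpj.neg_one_pow]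
  push_cast
  simp only [pow_succ]
  rw [hpar]
  have hne1 : ((i:ℚ)+1) ≠ 0 := by positivity
  have hne2 : ((j:ℚ)+1) ≠ 0 := by positivity
  have hne3 : ((i:ℚ)+(j:ℚ)+1) ≠ 0 := by positivity
  have hne4 : 6*(i:ℚ)-1 ≠ 0 := six_sub_one_ne i
  have hne5 : 6*(j:ℚ)+5 ≠ 0 := by positivity
  have hne6 : 6*(i:ℚ)+5 ≠ 0 := by positivity
  have hAi := auxA_ne i
  have hAj := auxA_ne j
  have hx1 : (5 + (j:ℚ)*11 + (j:ℚ)^2*6) ≠ 0 := by positivity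
  have hx2 : (5 + (j:ℚ)*5 + (j:ℚ)*(i:ℚ)*11 + (j:ℚ)*(i:ℚ)^2*6 + (i:ℚ)*16 + (i:ℚ)^2*17 + (i:ℚ)^3*6) ≠ 0 := by positivity
  have d1 : 6*((i:ℚ)+1)-1 = 6*(i:ℚ)+5 := by ring
  have d2 : 6*((j:ℚ)+1)-1 = 6*(j:ℚ)+5 := by ring
  rw [d1, d2]
  field_simp
  ring

lemma auxh_zero (n : ℕ) : auxh n 0 = 0 := by simp [auxh]

lemma tel_last (n : ℕ) (hn : n ≠ 0) (he : Even n) :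
    auxh n n + (auxE n 0 + auxE 0 n) = 0 := by
  unfold auxE auxh
  rw [Nat.sub_self, auxA_zero, he.neg_one_pow]
  have hne1 : (n:ℚ) ≠ 0 := by exact_mod_cast hn
  have hne2 : 6*(n:ℚ)-1 ≠ 0 := six_sub_one_ne n
  have hA := auxA_ne n
  push_cast
  have hne2' : (n:ℚ)*6-1 ≠ 0 := by rwa [mul_comm]
  field_simp
  ring

/-- `H₀(T) = Σ_{i≥0} (6i)!/((2i)!(3i)!) (−T)^i`. -/
noncomputable def seriesH0 : PowerSeries ℚ :=
  PowerSeries.mk fun i =>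
    ((6 * i).factorial : ℚ) / ((2 * i).factorial * (3 * i).factorial) * (-1) ^ i

/-- `H₁(T) = −Σ_{i≥0} (6i)!/((2i)!(3i)!) · (6i+1)/(6i−1) · (−T)^i`. -/
noncomputable def seriesH1 : PowerSeries ℚ :=
  PowerSeries.mk fun i =>
    -(((6 * i).factorial : ℚ) / ((2 * i).factorial * (3 * i).factorial) *
      ((6 * (i : ℚ) + 1) / (6 * (i : ℚ) - 1)) * (-1) ^ i)

theorem H0_H1_identity :
    seriesH0 * (rescale (-1) seriesH1) + (rescale (-1) seriesH0) * seriesH1 = 2 := by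
  ext n
  rw [map_add, coeff_mul, coeff_mul, ← Finset.sum_add_distrib,
    Finset.Nat.sum_antidiagonal_eq_sum_range_succ_mk]
  simp only [coeff_rescale, seriesH0, seriesH1, coeff_mk]
  have h2 : (coeff n) (2 : ℚ⟦X⟧) = if n = 0 then 2 else 0 := by
    rw [show (2 : ℚ⟦X⟧) = C 2 from (map_ofNat C 2).symm, coeff_C]
  rw [h2]
  rcases eq_or_ne n 0 with rfl | hn0
  · norm_num
  rw [if_neg hn0]
  rcases Nat.even_or_odd n with he | ho
  · -- even case
    trans (∑ x ∈ Finset.range n.succ, auxE x (n - x))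
    · apply Finset.sum_congr rfl
      intro x hx
      have hxn : x ≤ n := by have := Finset.mem_range.mp hx; omega
      simp only [auxA_def]
      have hd := six_sub_one_ne (n - x)
      unfold auxE
      rcases Nat.even_or_odd x with hp | hp
      · have hp2 : Even (n - x) := by
          rw [Nat.even_iff] at hp he ⊢; omega
        rw [hp.neg_one_pow, hp2.neg_one_pow]
        field_simp
        ring
      · have hp2 : Odd (n - x) := by
          rw [Nat.odd_iff] at hp ⊢; rw [Nat.even_iff] at he; omega
        rw [hp.neg_one_pow, hp2.neg_one_pow]
        field_simp
        ring
    -- reflection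
    have hrefl : ∑ x ∈ Finset.range n.succ, auxE (n - x) x
        = ∑ x ∈ Finset.range n.succ, auxE x (n - x) := by
      have h := Finset.sum_range_reflect (fun x => auxE x (n - x)) (n + 1)
      simp only [Nat.add_sub_cancel] at h
      rw [← h]
      apply Finset.sum_congr rfl
      intro x hx
      have hxn : x ≤ n := by have := Finset.mem_range.mp hx; omega
      rw [show n - (n - x) = x by omega]
    -- telescoping
    have htel : ∑ x ∈ Finset.range n.succ, (auxE x (n - x) + auxE (n - x) x) = 0 := by
      rw [Finset.sum_range_succ]
      have hmain : ∑ x ∈ Finset.range n, (auxE x (n - x) + auxE (n - x) x)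
          = auxh n n - auxh n 0 := by
        rw [← Finset.sum_range_sub (fun i => auxh n i) n]
        apply Finset.sum_congr rfl
        intro x hx
        exact tel n x (Finset.mem_range.mp hx) he
      rw [hmain, auxh_zero, Nat.sub_self, sub_zero]
      have := tel_last n hn0 he
      linarith
    rw [Finset.sum_add_distrib, hrefl] at htel
    linarith
  · -- odd case
    apply Finset.sum_eq_zero
    intro x hx
    have hxn : x ≤ n := by have := Finset.mem_range.mp hx; omega
    rcases Nat.even_or_odd x with hp | hp
    · have hp2 : Odd (n - x) := by
        rw [Nat.even_iff] at hp; rw [Nat.odd_iff] at ho ⊢; omega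
      rw [hp.neg_one_pow, hp2.neg_one_pow]
      ring
    · have hp2 : Even (n - x) := by
        rw [Nat.odd_iff] at hp ho; rw [Nat.even_iff]; omega
      rw [hp.neg_one_pow, hp2.neg_one_pow]
      ring
end

section
/- For every real number x, the improper integral defining the Airy function converges: the limit as R → ∞ of ∫₀^R cos(t³/3 + x·t) dt exists in ℝ. -/
open Filter intervalIntegral MeasureTheory Set

theorem airy_integral_converges (x : ℝ) :
    ∃ L : ℝ, Tendsto (fun R : ℝ => ∫ t in (0:ℝ)..R, Real.cos (t ^ 3 / 3 + x * t))
      atTop (nhds L) := by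
  set φ : ℝ → ℝ := fun t => t ^ 3 / 3 + x * t with hφ
  have hφc : Continuous φ := by
    exact ((continuous_pow 3).div_const 3).add (continuous_const.mul continuous_id)
  set a : ℝ := 1 + Real.sqrt (2 * |x|) with ha
  have ha1 : (1:ℝ) ≤ a := le_add_of_nonneg_right (Real.sqrt_nonneg _)
  have ha0 : (0:ℝ) < a := lt_of_lt_of_le one_pos ha1
  -- lower bound on t^2 + x
  have hlb : ∀ t : ℝ, a ≤ t → t ^ 2 / 2 ≤ t ^ 2 + x := by
    intro t ht
    have hts : Real.sqrt (2 * |x|) ≤ t := le_trans (by linarith [ha1]) ht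
    have h2x : 2 * |x| ≤ t ^ 2 := by
      have := Real.sq_sqrt (by positivity : (0:ℝ) ≤ 2 * |x|)
      nlinarith [Real.sqrt_nonneg (2 * |x|), pow_le_pow_left₀ (Real.sqrt_nonneg (2*|x|)) hts 2]
    have := abs_le.mp (le_refl |x|)
    cases abs_cases x with
    | inl h => nlinarith
    | inr h => nlinarith
  have hpos : ∀ t : ℝ, a ≤ t → 0 < t ^ 2 + x := by
    intro t ht
    have h1 : (1:ℝ) ≤ t := le_trans ha1 ht
    have := hlb t ht
    nlinarith
  set g : ℝ → ℝ := fun t => Real.sin (φ t) * (t ^ 2 + x)⁻¹ with hg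
  set H : ℝ → ℝ := fun t => Real.sin (φ t) * (2 * t / (t ^ 2 + x) ^ 2) with hH
  -- derivative of g
  have hderiv : ∀ t : ℝ, a ≤ t →
      HasDerivAt g (Real.cos (φ t) - H t) t := by
    intro t ht
    have hne : t ^ 2 + x ≠ 0 := (hpos t ht).ne'
    have hφd : HasDerivAt φ (t ^ 2 + x) t := by
      have h1 : HasDerivAt (fun t : ℝ => t ^ 3 / 3) (t ^ 2) t := by
        have := (hasDerivAt_pow 3 t).div_const 3
        simpa using this
      have h2 : HasDerivAt (fun t : ℝ => x * t) x t := by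
        simpa using (hasDerivAt_id t).const_mul x
      exact h1.add h2
    have hs : HasDerivAt (fun t => Real.sin (φ t)) (Real.cos (φ t) * (t ^ 2 + x)) t :=
      (Real.hasDerivAt_sin (φ t)).comp t hφd
    have hv : HasDerivAt (fun t : ℝ => (t ^ 2 + x)⁻¹)
        (-(2 * t) / (t ^ 2 + x) ^ 2) t := by
      have hq : HasDerivAt (fun t : ℝ => t ^ 2 + x) (2 * t) t := by
        simpa using (hasDerivAt_pow 2 t).add_const x
      exact hq.inv hne
    have := hs.mul hv
    convert this using 1
    · rfl
    · rfl
    · rfl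
    rw [mul_assoc (Real.cos (φ t)), mul_inv_cancel₀ hne]
    simp only [hH]
    ring
  -- integration by parts identity
  have key : ∀ R : ℝ, a ≤ R →
      (∫ t in a..R, Real.cos (φ t)) = g R - g a + ∫ t in a..R, H t := by
    intro R hR
    have hsub : Set.uIcc a R ⊆ Set.Ici a := by
      rw [Set.uIcc_of_le hR]; exact Set.Icc_subset_Ici_self
    have hcontH : ContinuousOn H (Set.uIcc a R) := by
      apply ContinuousOn.mul
      · exact ((Real.continuous_sin.comp hφc)).continuousOn
      · apply ContinuousOn.div
        · exact (continuous_const.mul continuous_id).continuousOn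
        · exact ((continuous_pow 2 |>.add continuous_const).pow 2).continuousOn
        · intro t ht
          exact pow_ne_zero 2 (hpos t (hsub ht)).ne'
    have hcont : ContinuousOn (fun t => Real.cos (φ t) - H t) (Set.uIcc a R) :=
      (Real.continuous_cos.comp hφc).continuousOn.sub hcontH
    have heq : (∫ t in a..R, (Real.cos (φ t) - H t)) = g R - g a := by
      apply intervalIntegral.integral_eq_sub_of_hasDerivAt
      · intro t ht
        exact hderiv t (hsub ht)
      · exact hcont.intervalIntegrable
    have hIH : IntervalIntegrable H volume a R := hcontH.intervalIntegrable
    have hIC : IntervalIntegrable (fun t => Real.cos (φ t)) volume a R :=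
      ((Real.continuous_cos.comp hφc).continuousOn).intervalIntegrable
    rw [intervalIntegral.integral_sub hIC hIH] at heq
    linarith
  -- integrability of H on Ioi a
  have hHint : IntegrableOn H (Set.Ioi a) := by
    have hmeas : AEStronglyMeasurable H (volume.restrict (Set.Ioi a)) := by
      apply ContinuousOn.aestronglyMeasurable _ measurableSet_Ioi
      apply ContinuousOn.mul
      · exact ((Real.continuous_sin.comp hφc)).continuousOn
      · apply ContinuousOn.div
        · exact (continuous_const.mul continuous_id).continuousOn
        · exact ((continuous_pow 2 |>.add continuous_const).pow 2).continuousOn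
        · intro t ht
          exact pow_ne_zero 2 (hpos t (le_of_lt ht)).ne'
    have hmaj : IntegrableOn (fun t : ℝ => 8 * t ^ (-3 : ℝ)) (Set.Ioi a) :=
      (integrableOn_Ioi_rpow_of_lt (by norm_num) ha0).const_mul 8
    apply Integrable.mono' hmaj hmeas
    filter_upwards [ae_restrict_mem measurableSet_Ioi] with t ht
    have hta : a ≤ t := le_of_lt ht
    have ht0 : (0:ℝ) < t := lt_of_lt_of_le ha0 hta
    have h1 : (0:ℝ) < t ^ 2 + x := hpos t hta
    have h2 : t ^ 2 / 2 ≤ t ^ 2 + x := hlb t hta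
    have hrw : t ^ (-3 : ℝ) = (t ^ 3)⁻¹ := by
      rw [Real.rpow_neg ht0.le, ← Real.rpow_natCast t 3]
      norm_num
    rw [hrw]
    have hb : |H t| ≤ 2 * t / (t ^ 2 + x) ^ 2 := by
      rw [hH, abs_mul]
      have h3 : |2 * t / (t ^ 2 + x) ^ 2| = 2 * t / (t ^ 2 + x) ^ 2 := by
        apply abs_of_nonneg; positivity
      rw [h3]
      calc |Real.sin (φ t)| * (2 * t / (t ^ 2 + x) ^ 2)
          ≤ 1 * (2 * t / (t ^ 2 + x) ^ 2) := by
            apply mul_le_mul_of_nonneg_right (Real.abs_sin_le_one _) (by positivity)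
        _ = 2 * t / (t ^ 2 + x) ^ 2 := one_mul _
    have hb2 : 2 * t / (t ^ 2 + x) ^ 2 ≤ 8 * (t ^ 3)⁻¹ := by
      rw [div_le_iff₀ (by positivity)]
      have ht3 : (0:ℝ) < t ^ 3 := by positivity
      rw [mul_comm (8:ℝ) _, inv_mul_eq_div, div_mul_eq_mul_div, le_div_iff₀ ht3]
      nlinarith [sq_nonneg (t^2 + x), sq_nonneg t]
    calc ‖H t‖ = |H t| := rfl
      _ ≤ 2 * t / (t ^ 2 + x) ^ 2 := hb
      _ ≤ 8 * (t ^ 3)⁻¹ := hb2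
  -- limits
  have T2 : Tendsto (fun R => ∫ t in a..R, H t) atTop (nhds (∫ t in Set.Ioi a, H t)) :=
    intervalIntegral_tendsto_integral_Ioi a hHint tendsto_id
  have T1 : Tendsto g atTop (nhds 0) := by
    apply squeeze_zero_norm' (a := fun R : ℝ => (R ^ 2 + x)⁻¹)
    · filter_upwards [eventually_ge_atTop a] with R hR
      have h1 : (0:ℝ) < R ^ 2 + x := hpos R hR
      calc ‖g R‖ = |Real.sin (φ R)| * |(R ^ 2 + x)⁻¹| := abs_mul _ _
        _ ≤ 1 * (R ^ 2 + x)⁻¹ := by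
            rw [abs_of_nonneg (by positivity : (0:ℝ) ≤ (R ^ 2 + x)⁻¹)]
            exact mul_le_mul_of_nonneg_right (Real.abs_sin_le_one _) (by positivity)
        _ = (R ^ 2 + x)⁻¹ := one_mul _
    · apply Tendsto.inv_tendsto_atTop
      exact tendsto_atTop_add_const_right _ x (tendsto_pow_atTop two_ne_zero)
  refine ⟨(∫ t in (0:ℝ)..a, Real.cos (φ t)) + (0 - g a + ∫ t in Set.Ioi a, H t), ?_⟩
  have Ttail : Tendsto (fun R => g R - g a + ∫ t in a..R, H t) atTop
      (nhds (0 - g a + ∫ t in Set.Ioi a, H t)) :=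
    (T1.sub tendsto_const_nhds).add T2
  have Tfull := (tendsto_const_nhds (x := ∫ t in (0:ℝ)..a, Real.cos (φ t))
    (f := atTop (α := ℝ))).add Ttail
  apply Tfull.congr'
  filter_upwards [eventually_ge_atTop a] with R hR
  have hsplit : (∫ t in (0:ℝ)..R, Real.cos (φ t)) =
      (∫ t in (0:ℝ)..a, Real.cos (φ t)) + ∫ t in a..R, Real.cos (φ t) := by
    rw [intervalIntegral.integral_add_adjacent_intervals] <;>
    exact ((Real.continuous_cos.comp hφc).continuousOn).intervalIntegrable
  rw [hsplit, key R hR]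
end

section
/- Define Ai : ℝ → ℝ by Ai(x) = lim_{R→∞} ∫₀^R cos(t³/3 + x·t) dt. Then Ai is twice differentiable on ℝ and satisfies the Airy differential equation Ai''(x) = x·Ai(x) for all real x. -/
open Filter intervalIntegral
open Topology MeasureTheory

/-- The Airy function, defined as the improper integral
`Ai(x) = lim_{R→∞} ∫₀^R cos(t³/3 + xt) dt`. -/
noncomputable def Ai (x : ℝ) : ℝ :=
  limUnder atTop (fun R : ℝ => ∫ t in (0:ℝ)..R, Real.cos (t ^ 3 / 3 + x * t))

lemma hasDerivAt_phi (x t : ℝ) :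
    HasDerivAt (fun t : ℝ => t ^ 3 / 3 + x * t) (t ^ 2 + x) t := by
  have h1 : HasDerivAt (fun t : ℝ => t ^ 3 / 3) (t ^ 2) t := by
    have := (hasDerivAt_pow 3 t).div_const 3
    refine this.congr_deriv ?_; ring
  have h2 : HasDerivAt (fun t : ℝ => x * t) x t := by
    simpa using (hasDerivAt_id t).const_mul x
  exact h1.add h2

lemma cos_tail_bound {M a b x : ℝ} (hx : |x| ≤ M) (ha1 : 1 ≤ a)
    (haM : 2 * M ≤ a ^ 2) (hab : a ≤ b) :
    |∫ t in a..b, Real.cos (t ^ 3 / 3 + x * t)| ≤ 4 / a := by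
  have ha0 : (0:ℝ) < a := lt_of_lt_of_le one_pos ha1
  have hxM : -M ≤ x := neg_le_of_abs_le hx
  have key : ∀ t : ℝ, a ≤ t → t ^ 2 / 2 ≤ t ^ 2 + x ∧ 0 < t ^ 2 + x := by
    intro t ht
    have h1 : a ^ 2 ≤ t ^ 2 := by nlinarith
    constructor <;> nlinarith
  have hIcc : Set.uIcc a b = Set.Icc a b := Set.uIcc_of_le hab
  have hne : ∀ t ∈ Set.uIcc a b, t ^ 2 + x ≠ 0 := by
    intro t ht
    rw [hIcc] at ht
    exact (key t ht.1).2.ne'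
  -- integration by parts
  have hu : ∀ t ∈ Set.uIcc a b, HasDerivAt (fun t : ℝ => (t ^ 2 + x)⁻¹)
      (-(2 * t) / (t ^ 2 + x) ^ 2) t := by
    intro t ht
    have h := ((hasDerivAt_pow 2 t).add_const x).inv (hne t ht)
    refine h.congr_deriv ?_
    field_simp
    ring
  have hv : ∀ t ∈ Set.uIcc a b, HasDerivAt (fun t : ℝ => Real.sin (t ^ 3 / 3 + x * t))
      (Real.cos (t ^ 3 / 3 + x * t) * (t ^ 2 + x)) t := fun t _ => (hasDerivAt_phi x t).sin
  have hcont : ContinuousOn (fun t : ℝ => (t ^ 2 + x) ^ 2) (Set.uIcc a b) := by fun_prop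
  have hu' : IntervalIntegrable (fun t : ℝ => -(2 * t) / (t ^ 2 + x) ^ 2) MeasureTheory.volume a b := by
    apply ContinuousOn.intervalIntegrable
    exact (continuousOn_const.mul continuousOn_id).neg.div hcont
      (fun t ht => pow_ne_zero 2 (hne t ht))
  have hv' : IntervalIntegrable (fun t : ℝ => Real.cos (t ^ 3 / 3 + x * t) * (t ^ 2 + x))
      MeasureTheory.volume a b := (Continuous.intervalIntegrable (by fun_prop) a b)
  have hparts := intervalIntegral.integral_mul_deriv_eq_deriv_mul hu hv hu' hv'
  have hcongr : (∫ t in a..b, Real.cos (t ^ 3 / 3 + x * t)) =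
      ∫ t in a..b, (t ^ 2 + x)⁻¹ * (Real.cos (t ^ 3 / 3 + x * t) * (t ^ 2 + x)) := by
    apply intervalIntegral.integral_congr
    intro t ht
    have := hne t ht
    field_simp
  rw [hcongr, hparts]
  -- bound the remaining integral
  have hga := key a le_rfl
  have hgb := key b hab
  have hJ : |∫ t in a..b, -(2 * t) / (t ^ 2 + x) ^ 2 * Real.sin (t ^ 3 / 3 + x * t)| ≤
      (a ^ 2 + x)⁻¹ - (b ^ 2 + x)⁻¹ := by
    have hgint : IntervalIntegrable (fun t : ℝ => 2 * t / (t ^ 2 + x) ^ 2)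
        MeasureTheory.volume a b := by
      apply ContinuousOn.intervalIntegrable
      exact (continuousOn_const.mul continuousOn_id).div hcont
        (fun t ht => pow_ne_zero 2 (hne t ht))
    have hbnd : ∀ᵐ t ∂MeasureTheory.volume.restrict (Set.uIoc a b),
        ‖-(2 * t) / (t ^ 2 + x) ^ 2 * Real.sin (t ^ 3 / 3 + x * t)‖ ≤
          2 * t / (t ^ 2 + x) ^ 2 := by
      rw [MeasureTheory.ae_restrict_iff' measurableSet_uIoc]
      apply MeasureTheory.ae_of_all
      intro t ht
      rw [Set.uIoc_of_le hab] at ht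
      have ht0 : 0 < t := lt_of_le_of_lt (le_of_lt ha0) ht.1
      have hq : 0 < (t ^ 2 + x) ^ 2 := by
        have := (key t (le_of_lt ht.1)).2; positivity
      rw [Real.norm_eq_abs, abs_mul, abs_div, abs_neg]
      have h1 : |2 * t| = 2 * t := abs_of_pos (by linarith)
      have h2 : |(t ^ 2 + x) ^ 2| = (t ^ 2 + x) ^ 2 := abs_of_pos hq
      rw [h1, h2]
      have := Real.abs_sin_le_one (t ^ 3 / 3 + x * t)
      calc 2 * t / (t ^ 2 + x) ^ 2 * |Real.sin (t ^ 3 / 3 + x * t)| ≤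
            2 * t / (t ^ 2 + x) ^ 2 * 1 := by
            apply mul_le_mul_of_nonneg_left this (by positivity)
        _ = 2 * t / (t ^ 2 + x) ^ 2 := mul_one _
    have h := intervalIntegral.norm_integral_le_abs_of_norm_le hbnd hgint
    have hgval : (∫ t in a..b, 2 * t / (t ^ 2 + x) ^ 2) = (a ^ 2 + x)⁻¹ - (b ^ 2 + x)⁻¹ := by
      have := intervalIntegral.integral_eq_sub_of_hasDerivAt (f := fun t : ℝ => -(t ^ 2 + x)⁻¹)
        (f' := fun t : ℝ => 2 * t / (t ^ 2 + x) ^ 2) (a := a) (b := b) ?_ hgint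
      · rw [this]; ring
      · intro t ht
        have h := (((hasDerivAt_pow 2 t).add_const x).inv (hne t ht)).neg
        refine h.congr_deriv ?_
        field_simp
        ring
    rw [Real.norm_eq_abs] at h
    calc |∫ t in a..b, -(2 * t) / (t ^ 2 + x) ^ 2 * Real.sin (t ^ 3 / 3 + x * t)| ≤
        |∫ t in a..b, 2 * t / (t ^ 2 + x) ^ 2| := h
      _ = (a ^ 2 + x)⁻¹ - (b ^ 2 + x)⁻¹ := by
          rw [hgval, abs_of_nonneg]
          have : a ^ 2 + x ≤ b ^ 2 + x := by nlinarith
          have := inv_anti₀ hga.2 this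
          linarith
  -- assemble
  have h1 : |(b ^ 2 + x)⁻¹ * Real.sin (b ^ 3 / 3 + x * b)| ≤ (b ^ 2 + x)⁻¹ := by
    rw [abs_mul, abs_of_pos (inv_pos.mpr hgb.2)]
    calc (b ^ 2 + x)⁻¹ * |Real.sin (b ^ 3 / 3 + x * b)| ≤ (b ^ 2 + x)⁻¹ * 1 :=
        mul_le_mul_of_nonneg_left (Real.abs_sin_le_one _) (le_of_lt (inv_pos.mpr hgb.2))
      _ = _ := mul_one _
  have h2 : |(a ^ 2 + x)⁻¹ * Real.sin (a ^ 3 / 3 + x * a)| ≤ (a ^ 2 + x)⁻¹ := by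
    rw [abs_mul, abs_of_pos (inv_pos.mpr hga.2)]
    calc (a ^ 2 + x)⁻¹ * |Real.sin (a ^ 3 / 3 + x * a)| ≤ (a ^ 2 + x)⁻¹ * 1 :=
        mul_le_mul_of_nonneg_left (Real.abs_sin_le_one _) (le_of_lt (inv_pos.mpr hga.2))
      _ = _ := mul_one _
  have htotal : |(b ^ 2 + x)⁻¹ * Real.sin (b ^ 3 / 3 + x * b) -
      (a ^ 2 + x)⁻¹ * Real.sin (a ^ 3 / 3 + x * a) -
      ∫ t in a..b, -(2 * t) / (t ^ 2 + x) ^ 2 * Real.sin (t ^ 3 / 3 + x * t)| ≤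
      2 * (a ^ 2 + x)⁻¹ := by
    have hAB : |(b ^ 2 + x)⁻¹ * Real.sin (b ^ 3 / 3 + x * b) -
        (a ^ 2 + x)⁻¹ * Real.sin (a ^ 3 / 3 + x * a)| ≤ (b ^ 2 + x)⁻¹ + (a ^ 2 + x)⁻¹ :=
      le_trans (abs_sub _ _) (add_le_add h1 h2)
    calc _ ≤ |(b ^ 2 + x)⁻¹ * Real.sin (b ^ 3 / 3 + x * b) -
          (a ^ 2 + x)⁻¹ * Real.sin (a ^ 3 / 3 + x * a)| +
          |∫ t in a..b, -(2 * t) / (t ^ 2 + x) ^ 2 * Real.sin (t ^ 3 / 3 + x * t)| :=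
        abs_sub _ _
      _ ≤ ((b ^ 2 + x)⁻¹ + (a ^ 2 + x)⁻¹) + ((a ^ 2 + x)⁻¹ - (b ^ 2 + x)⁻¹) :=
        add_le_add hAB hJ
      _ = 2 * (a ^ 2 + x)⁻¹ := by ring
  refine le_trans htotal ?_
  have hinv : (a ^ 2 + x)⁻¹ ≤ 2 / a ^ 2 := by
    rw [show (2:ℝ) / a ^ 2 = (a ^ 2 / 2)⁻¹ by rw [inv_div]]
    exact inv_anti₀ (by positivity) hga.1
  have h42 : (4:ℝ) / a ^ 2 = 2 * (2 / a ^ 2) := by ring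
  have : 2 * (a ^ 2 + x)⁻¹ ≤ 4 / a ^ 2 := by rw [h42]; linarith
  refine le_trans this ?_
  rw [div_le_div_iff₀ (by positivity) ha0]
  nlinarith

lemma tsin_tail_bound {M a b x : ℝ} (hx : |x| ≤ M) (ha1 : 1 ≤ a)
    (haM : 2 * M ≤ a ^ 2) (hab : a ≤ b) :
    |∫ t in a..b, t * Real.sin (t ^ 3 / 3 + x * t)| ≤ 10 / a := by
  have ha0 : (0:ℝ) < a := lt_of_lt_of_le one_pos ha1
  have hxM : -M ≤ x := neg_le_of_abs_le hx
  have hxM' : x ≤ M := le_of_abs_le hx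
  have hM0 : 0 ≤ M := le_trans (abs_nonneg x) hx
  have key : ∀ t : ℝ, a ≤ t → t ^ 2 / 2 ≤ t ^ 2 + x ∧ 0 < t ^ 2 + x := by
    intro t ht
    have h1 : a ^ 2 ≤ t ^ 2 := by nlinarith
    constructor <;> nlinarith
  have hIcc : Set.uIcc a b = Set.Icc a b := Set.uIcc_of_le hab
  have hne : ∀ t ∈ Set.uIcc a b, t ^ 2 + x ≠ 0 := by
    intro t ht
    rw [hIcc] at ht
    exact (key t ht.1).2.ne'
  have htne : ∀ t ∈ Set.uIcc a b, t ≠ 0 := by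
    intro t ht
    rw [hIcc] at ht
    exact (lt_of_lt_of_le ha0 ht.1).ne'
  -- integration by parts: u = -(t/(t²+x)), v = cos φ
  have hu : ∀ t ∈ Set.uIcc a b, HasDerivAt (fun t : ℝ => -(t / (t ^ 2 + x)))
      ((t ^ 2 - x) / (t ^ 2 + x) ^ 2) t := by
    intro t ht
    have h := ((hasDerivAt_id t).div ((hasDerivAt_pow 2 t).add_const x) (hne t ht)).neg
    refine h.congr_deriv ?_
    have hne' := hne t ht
    simp only [id_eq]
    field_simp
    ring
  have hv : ∀ t ∈ Set.uIcc a b, HasDerivAt (fun t : ℝ => Real.cos (t ^ 3 / 3 + x * t))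
      (-Real.sin (t ^ 3 / 3 + x * t) * (t ^ 2 + x)) t := fun t _ => (hasDerivAt_phi x t).cos
  have hcont2 : ContinuousOn (fun t : ℝ => (t ^ 2 + x) ^ 2) (Set.uIcc a b) := by fun_prop
  have hu' : IntervalIntegrable (fun t : ℝ => (t ^ 2 - x) / (t ^ 2 + x) ^ 2)
      MeasureTheory.volume a b := by
    apply ContinuousOn.intervalIntegrable
    exact ((continuousOn_pow 2).sub continuousOn_const).div hcont2
      (fun t ht => pow_ne_zero 2 (hne t ht))
  have hv' : IntervalIntegrable (fun t : ℝ => -Real.sin (t ^ 3 / 3 + x * t) * (t ^ 2 + x))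
      MeasureTheory.volume a b := Continuous.intervalIntegrable (by fun_prop) a b
  have hparts := intervalIntegral.integral_mul_deriv_eq_deriv_mul hu hv hu' hv'
  have hcongr : (∫ t in a..b, t * Real.sin (t ^ 3 / 3 + x * t)) =
      ∫ t in a..b, -(t / (t ^ 2 + x)) * (-Real.sin (t ^ 3 / 3 + x * t) * (t ^ 2 + x)) := by
    apply intervalIntegral.integral_congr
    intro t ht
    have := hne t ht
    field_simp
  rw [hcongr, hparts]
  have hga := key a le_rfl
  have hgb := key b hab
  -- boundary bounds
  have hbd : ∀ t : ℝ, a ≤ t → |-(t / (t ^ 2 + x)) * Real.cos (t ^ 3 / 3 + x * t)| ≤ 2 / a := by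
    intro t ht
    have hk := key t ht
    have ht0 : 0 < t := lt_of_lt_of_le ha0 ht
    have h1 : |-(t / (t ^ 2 + x)) * Real.cos (t ^ 3 / 3 + x * t)| ≤ t / (t ^ 2 + x) := by
      rw [abs_mul, abs_neg, abs_div, abs_of_pos ht0, abs_of_pos hk.2]
      calc t / (t ^ 2 + x) * |Real.cos (t ^ 3 / 3 + x * t)| ≤ t / (t ^ 2 + x) * 1 :=
          mul_le_mul_of_nonneg_left (Real.abs_cos_le_one _) (le_of_lt (div_pos ht0 hk.2))
        _ = _ := mul_one _
    refine le_trans h1 ?_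
    rw [div_le_div_iff₀ hk.2 ha0]
    nlinarith [hk.1, sq_nonneg (t - a)]
  -- integral bound
  have hJ : |∫ t in a..b, (t ^ 2 - x) / (t ^ 2 + x) ^ 2 * Real.cos (t ^ 3 / 3 + x * t)| ≤
      6 / a := by
    have hgint : IntervalIntegrable (fun t : ℝ => 6 / t ^ 2) MeasureTheory.volume a b := by
      apply ContinuousOn.intervalIntegrable
      exact continuousOn_const.div (continuousOn_pow 2)
        (fun t ht => pow_ne_zero 2 (htne t ht))
    have hbnd : ∀ᵐ t ∂MeasureTheory.volume.restrict (Set.uIoc a b),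
        ‖(t ^ 2 - x) / (t ^ 2 + x) ^ 2 * Real.cos (t ^ 3 / 3 + x * t)‖ ≤ 6 / t ^ 2 := by
      rw [MeasureTheory.ae_restrict_iff' measurableSet_uIoc]
      apply MeasureTheory.ae_of_all
      intro t ht
      rw [Set.uIoc_of_le hab] at ht
      have hta : a ≤ t := le_of_lt ht.1
      have hk := key t hta
      have ht0 : 0 < t := lt_of_lt_of_le ha0 hta
      have ha2t : a ^ 2 ≤ t ^ 2 := pow_le_pow_left₀ (le_of_lt ha0) hta 2
      rw [Real.norm_eq_abs, abs_mul, abs_div, abs_of_pos (pow_pos hk.2 2)]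
      have h2 : |t ^ 2 - x| ≤ t ^ 2 + M := by
        rw [abs_sub_le_iff]
        constructor <;> linarith
      have hMu : M ≤ t ^ 2 / 2 := by linarith
      have h3 : |t ^ 2 - x| / (t ^ 2 + x) ^ 2 ≤ 6 / t ^ 2 := by
        rw [div_le_div_iff₀ (pow_pos hk.2 2) (by positivity)]
        have hsq : (t ^ 2 / 2) ^ 2 ≤ (t ^ 2 + x) ^ 2 :=
          pow_le_pow_left₀ (by positivity) hk.1 2
        calc |t ^ 2 - x| * t ^ 2 ≤ (t ^ 2 + M) * t ^ 2 :=
            mul_le_mul_of_nonneg_right h2 (sq_nonneg t)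
          _ ≤ 6 * (t ^ 2 / 2) ^ 2 := by nlinarith [mul_le_mul_of_nonneg_right hMu (sq_nonneg t)]
          _ ≤ 6 * (t ^ 2 + x) ^ 2 := by linarith
      calc |t ^ 2 - x| / (t ^ 2 + x) ^ 2 * |Real.cos (t ^ 3 / 3 + x * t)| ≤
            |t ^ 2 - x| / (t ^ 2 + x) ^ 2 * 1 :=
          mul_le_mul_of_nonneg_left (Real.abs_cos_le_one _)
            (div_nonneg (abs_nonneg _) (le_of_lt (pow_pos hk.2 2)))
        _ = |t ^ 2 - x| / (t ^ 2 + x) ^ 2 := mul_one _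
        _ ≤ 6 / t ^ 2 := h3
    have h := intervalIntegral.norm_integral_le_abs_of_norm_le hbnd hgint
    have hgval : (∫ t in a..b, 6 / t ^ 2) = 6 / a - 6 / b := by
      have := intervalIntegral.integral_eq_sub_of_hasDerivAt (f := fun t : ℝ => -(6 * t⁻¹))
        (f' := fun t : ℝ => 6 / t ^ 2) (a := a) (b := b) ?_ hgint
      · rw [this]; ring
      · intro t ht
        have h := ((hasDerivAt_inv (htne t ht)).const_mul 6).neg
        refine h.congr_deriv ?_
        ring
    rw [Real.norm_eq_abs] at h
    refine le_trans h ?_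
    have hb0 : (0:ℝ) < b := lt_of_lt_of_le ha0 hab
    have h6b : (0:ℝ) ≤ 6 / b := div_nonneg (by norm_num) hb0.le
    have h6 : 6 / b ≤ 6 / a := by gcongr
    rw [hgval, abs_of_nonneg (by linarith)]
    linarith
  -- assemble
  have hba : a ≤ b := hab
  have h1 := hbd b hab
  have h2 := hbd a le_rfl
  have hAB : |-(b / (b ^ 2 + x)) * Real.cos (b ^ 3 / 3 + x * b) -
      -(a / (a ^ 2 + x)) * Real.cos (a ^ 3 / 3 + x * a)| ≤ 2 / a + 2 / a :=
    le_trans (abs_sub _ _) (add_le_add h1 h2)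
  calc _ ≤ |-(b / (b ^ 2 + x)) * Real.cos (b ^ 3 / 3 + x * b) -
        -(a / (a ^ 2 + x)) * Real.cos (a ^ 3 / 3 + x * a)| +
        |∫ t in a..b, (t ^ 2 - x) / (t ^ 2 + x) ^ 2 * Real.cos (t ^ 3 / 3 + x * t)| :=
      abs_sub _ _
    _ ≤ (2 / a + 2 / a) + 6 / a := add_le_add hAB hJ
    _ = 10 / a := by ring

noncomputable def F (R x : ℝ) : ℝ := ∫ t in (0:ℝ)..R, Real.cos (t ^ 3 / 3 + x * t)
noncomputable def G (R x : ℝ) : ℝ := ∫ t in (0:ℝ)..R, -(t * Real.sin (t ^ 3 / 3 + x * t))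
noncomputable def K (R x : ℝ) : ℝ :=
  G (max 1 R) x - Real.cos ((max 1 R) ^ 3 / 3 + x * (max 1 R)) / (max 1 R)

noncomputable def Ai' (x : ℝ) : ℝ := limUnder atTop (fun R => G R x)

lemma cont_cos (x : ℝ) : Continuous fun t : ℝ => Real.cos (t ^ 3 / 3 + x * t) := by fun_prop

lemma cont_tsin (x : ℝ) : Continuous fun t : ℝ => -(t * Real.sin (t ^ 3 / 3 + x * t)) := by
  fun_prop

lemma F_sub {x a b : ℝ} : F b x - F a x = ∫ t in a..b, Real.cos (t ^ 3 / 3 + x * t) :=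
  intervalIntegral.integral_interval_sub_left ((cont_cos x).intervalIntegrable 0 b)
    ((cont_cos x).intervalIntegrable 0 a)

lemma G_sub {x a b : ℝ} : G b x - G a x = ∫ t in a..b, -(t * Real.sin (t ^ 3 / 3 + x * t)) :=
  intervalIntegral.integral_interval_sub_left ((cont_tsin x).intervalIntegrable 0 b)
    ((cont_tsin x).intervalIntegrable 0 a)

lemma uniformCauchy_of_tail {f : ℝ → ℝ → ℝ} {s : Set ℝ} {C M : ℝ} (hC : 0 < C)
    (h : ∀ x ∈ s, ∀ a b : ℝ, 1 ≤ a → 2 * M ≤ a ^ 2 → a ≤ b → |f b x - f a x| ≤ C / a) :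
    UniformCauchySeqOn f atTop s := by
  rw [Metric.uniformCauchySeqOn_iff]
  intro ε hε
  refine ⟨max (max 1 (Real.sqrt (2 * M))) (2 * C / ε), fun m hm n hn x hx => ?_⟩
  set N : ℝ := max (max 1 (Real.sqrt (2 * M))) (2 * C / ε) with hNdef
  have hN1 : 1 ≤ N := le_trans (le_max_left _ _) (le_max_left _ _)
  have hN0 : (0:ℝ) < N := lt_of_lt_of_le one_pos hN1
  have hNC : 2 * C / ε ≤ N := le_max_right _ _
  have h2C : (0:ℝ) < 2 * C / ε := by positivity
  have hCN : C / N < ε := by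
    have h1 : C / N ≤ C / (2 * C / ε) := by gcongr
    have h2 : C / (2 * C / ε) = ε / 2 := by
      field_simp
    rw [h2] at h1
    linarith
  have hNM : ∀ r : ℝ, N ≤ r → 2 * M ≤ r ^ 2 := by
    intro r hr
    rcases le_or_gt (2 * M) 0 with h0 | h0
    · nlinarith
    · have hsq : Real.sqrt (2 * M) ≤ r :=
        le_trans (le_trans (le_max_right _ _) (le_max_left _ _)) hr
      nlinarith [Real.sq_sqrt h0.le, Real.sqrt_nonneg (2 * M)]
  have hbound : ∀ p q : ℝ, N ≤ p → p ≤ q → dist (f p x) (f q x) < ε := by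
    intro p q hp hpq
    have h1 : 1 ≤ p := le_trans hN1 hp
    have hp0 : (0:ℝ) < p := lt_of_lt_of_le one_pos h1
    have hfb := h x hx p q h1 (hNM p hp) hpq
    have hcp : C / p ≤ C / N := by gcongr
    rw [dist_comm, Real.dist_eq]
    linarith
  rcases le_total m n with hmn | hmn
  · exact hbound m n hm hmn
  · rw [dist_comm]; exact hbound n m hn hmn

lemma uniformCauchy_F (M : ℝ) : UniformCauchySeqOn F atTop {y : ℝ | |y| ≤ M} := by
  refine uniformCauchy_of_tail (C := 4) (M := M) (by norm_num) ?_
  intro x hx a b h1 h2 hab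
  rw [F_sub]
  exact cos_tail_bound hx h1 h2 hab

lemma uniformCauchy_G (M : ℝ) : UniformCauchySeqOn G atTop {y : ℝ | |y| ≤ M} := by
  refine uniformCauchy_of_tail (C := 10) (M := M) (by norm_num) ?_
  intro x hx a b h1 h2 hab
  rw [G_sub, intervalIntegral.integral_neg, abs_neg]
  exact tsin_tail_bound hx h1 h2 hab

lemma exists_tendsto_of_uniformCauchy {f : ℝ → ℝ → ℝ} {s : Set ℝ} {x : ℝ}
    (h : UniformCauchySeqOn f atTop s) (hx : x ∈ s) :
    ∃ L, Tendsto (fun R => f R x) atTop (𝓝 L) := by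
  rw [← cauchy_map_iff_exists_tendsto, cauchy_map_iff]
  refine ⟨atTop_neBot, fun u hu => ?_⟩
  exact (h u hu).mono fun p hp => hp x hx

lemma tendsto_F (x : ℝ) : Tendsto (fun R => F R x) atTop (𝓝 (Ai x)) :=
  tendsto_nhds_limUnder
    (exists_tendsto_of_uniformCauchy (uniformCauchy_F |x|) (by simp : x ∈ {y : ℝ | |y| ≤ |x|}))

lemma tendsto_G (x : ℝ) : Tendsto (fun R => G R x) atTop (𝓝 (Ai' x)) :=
  tendsto_nhds_limUnder
    (exists_tendsto_of_uniformCauchy (uniformCauchy_G |x|) (by simp : x ∈ {y : ℝ | |y| ≤ |x|}))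

lemma hasDerivAt_F (R x : ℝ) : HasDerivAt (fun y => F R y) (G R x) x := by
  have h := intervalIntegral.hasDerivAt_integral_of_dominated_loc_of_deriv_le
    (F := fun (y : ℝ) (t : ℝ) => Real.cos (t ^ 3 / 3 + y * t))
    (F' := fun (y : ℝ) (t : ℝ) => -(t * Real.sin (t ^ 3 / 3 + y * t)))
    (bound := fun t => |t|) (μ := MeasureTheory.volume) (a := 0) (b := R) (x₀ := x)
    (s := Metric.ball x 1) (Metric.ball_mem_nhds x one_pos)
    (Eventually.of_forall fun y => ((cont_cos y).aestronglyMeasurable).restrict)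
    ((cont_cos x).intervalIntegrable 0 R)
    ((cont_tsin x).aestronglyMeasurable).restrict
    (MeasureTheory.ae_of_all _ fun t _ y _ => ?_)
    ((continuous_abs).intervalIntegrable 0 R)
    (MeasureTheory.ae_of_all _ fun t _ y _ => ?_)
  · exact h.2
  · rw [Real.norm_eq_abs, abs_neg, abs_mul]
    exact mul_le_of_le_one_right (abs_nonneg t) (Real.abs_sin_le_one _)
  · have h1 : HasDerivAt (fun y : ℝ => t ^ 3 / 3 + y * t) t y := by
      simpa using ((hasDerivAt_id y).mul_const t).const_add (t ^ 3 / 3)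
    have := h1.cos
    refine this.congr_deriv ?_
    ring

lemma integral_neg_tsq_cos (R x : ℝ) :
    (∫ t in (0:ℝ)..R, -(t ^ 2 * Real.cos (t ^ 3 / 3 + x * t))) =
      x * F R x - Real.sin (R ^ 3 / 3 + x * R) := by
  have hftc : (∫ t in (0:ℝ)..R, Real.cos (t ^ 3 / 3 + x * t) * (t ^ 2 + x)) =
      Real.sin (R ^ 3 / 3 + x * R) := by
    have h := intervalIntegral.integral_eq_sub_of_hasDerivAt
      (f := fun t : ℝ => Real.sin (t ^ 3 / 3 + x * t))
      (f' := fun t : ℝ => Real.cos (t ^ 3 / 3 + x * t) * (t ^ 2 + x))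
      (a := 0) (b := R) (fun t _ => (hasDerivAt_phi x t).sin)
      (Continuous.intervalIntegrable (by fun_prop) 0 R)
    simpa using h
  have hfun : (fun t : ℝ => -(t ^ 2 * Real.cos (t ^ 3 / 3 + x * t))) =
      fun t : ℝ => x * Real.cos (t ^ 3 / 3 + x * t) -
        Real.cos (t ^ 3 / 3 + x * t) * (t ^ 2 + x) := by
    funext t; ring
  rw [hfun, intervalIntegral.integral_sub
      (Continuous.intervalIntegrable (by fun_prop) 0 R)
      (Continuous.intervalIntegrable (by fun_prop) 0 R),
    intervalIntegral.integral_const_mul, hftc]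
  rfl

lemma hasDerivAt_G (R x : ℝ) :
    HasDerivAt (fun y => G R y) (x * F R x - Real.sin (R ^ 3 / 3 + x * R)) x := by
  have h := intervalIntegral.hasDerivAt_integral_of_dominated_loc_of_deriv_le
    (F := fun (y : ℝ) (t : ℝ) => -(t * Real.sin (t ^ 3 / 3 + y * t)))
    (F' := fun (y : ℝ) (t : ℝ) => -(t ^ 2 * Real.cos (t ^ 3 / 3 + y * t)))
    (bound := fun t => t ^ 2) (μ := MeasureTheory.volume) (a := 0) (b := R) (x₀ := x)
    (s := Metric.ball x 1) (Metric.ball_mem_nhds x one_pos)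
    (Eventually.of_forall fun y => ((cont_tsin y).aestronglyMeasurable).restrict)
    ((cont_tsin x).intervalIntegrable 0 R)
    (((by fun_prop : Continuous fun t : ℝ =>
      -(t ^ 2 * Real.cos (t ^ 3 / 3 + x * t))).aestronglyMeasurable).restrict)
    (MeasureTheory.ae_of_all _ fun t _ y _ => ?_)
    ((continuous_pow 2).intervalIntegrable 0 R)
    (MeasureTheory.ae_of_all _ fun t _ y _ => ?_)
  · have h2 := h.2
    rw [integral_neg_tsq_cos R x] at h2
    exact h2
  · rw [Real.norm_eq_abs, abs_neg, abs_mul, abs_pow, sq_abs]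
    exact mul_le_of_le_one_right (sq_nonneg t) (Real.abs_cos_le_one _)
  · have h1 : HasDerivAt (fun y : ℝ => t ^ 3 / 3 + y * t) t y := by
      simpa using ((hasDerivAt_id y).mul_const t).const_add (t ^ 3 / 3)
    have := (h1.sin.const_mul t).neg
    refine this.congr_deriv ?_
    ring

lemma hasDerivAt_K (R x : ℝ) : HasDerivAt (fun y => K R y) (x * F (max 1 R) x) x := by
  set S := max 1 R with hS
  have hS1 : (1:ℝ) ≤ S := le_max_left _ _
  have hS0 : (0:ℝ) < S := lt_of_lt_of_le one_pos hS1
  have h1 : HasDerivAt (fun y => G S y) (x * F S x - Real.sin (S ^ 3 / 3 + x * S)) x :=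
    hasDerivAt_G S x
  have h2 : HasDerivAt (fun y : ℝ => Real.cos (S ^ 3 / 3 + y * S) / S)
      (-Real.sin (S ^ 3 / 3 + x * S)) x := by
    have hi : HasDerivAt (fun y : ℝ => S ^ 3 / 3 + y * S) S x := by
      simpa using ((hasDerivAt_id x).mul_const S).const_add (S ^ 3 / 3)
    have h := hi.cos.div_const S
    refine h.congr_deriv ?_
    field_simp
  have h3 := h1.sub h2
  have heq : (x * F S x - Real.sin (S ^ 3 / 3 + x * S)) - (-Real.sin (S ^ 3 / 3 + x * S)) =
      x * F S x := by ring
  rw [heq] at h3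
  exact h3

lemma airy_derivs (x₀ : ℝ) :
    HasDerivAt Ai (Ai' x₀) x₀ ∧ HasDerivAt Ai' (x₀ * Ai x₀) x₀ := by
  set M := |x₀| + 1 with hM
  have hM0 : (0:ℝ) < M := by positivity
  have hs : IsOpen (Set.Ioo (-M) M) := isOpen_Ioo
  have hx₀ : x₀ ∈ Set.Ioo (-M) M := by
    constructor
    · linarith [neg_abs_le x₀]
    · linarith [le_abs_self x₀]
  have hsub : Set.Ioo (-M) M ⊆ {y : ℝ | |y| ≤ M} := by
    intro y hy
    simp only [Set.mem_setOf_eq]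
    rw [abs_le]
    exact ⟨hy.1.le, hy.2.le⟩
  have hGu : TendstoUniformlyOn G Ai' atTop (Set.Ioo (-M) M) :=
    ((uniformCauchy_G M).mono hsub).tendstoUniformlyOn_of_tendsto fun y _ => tendsto_G y
  have hFu : TendstoUniformlyOn F Ai atTop (Set.Ioo (-M) M) :=
    ((uniformCauchy_F M).mono hsub).tendstoUniformlyOn_of_tendsto fun y _ => tendsto_F y
  have hd1 : HasDerivAt Ai (Ai' x₀) x₀ :=
    hasDerivAt_of_tendstoUniformlyOn hs hGu
      (Eventually.of_forall fun R y _ => hasDerivAt_F R y) (fun y _ => tendsto_F y) hx₀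
  have hmax : Tendsto (fun R : ℝ => max 1 R) atTop atTop :=
    tendsto_atTop_mono (fun R => le_max_right 1 R) tendsto_id
  have hFu' : TendstoUniformlyOn (fun R y => F (max 1 R) y) Ai atTop (Set.Ioo (-M) M) :=
    fun u hu => hmax.eventually (hFu u hu)
  have hxFu : TendstoUniformlyOn (fun R y => y * F (max 1 R) y) (fun y => y * Ai y) atTop
      (Set.Ioo (-M) M) := by
    rw [Metric.tendstoUniformlyOn_iff] at hFu' ⊢
    intro ε hε
    filter_upwards [hFu' (ε / M) (by positivity)] with R hR y hy
    have hyM : |y| ≤ M := hsub hy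
    have hd := hR y hy
    rw [Real.dist_eq] at hd ⊢
    calc |y * Ai y - y * F (max 1 R) y| = |y| * |Ai y - F (max 1 R) y| := by
          rw [← mul_sub, abs_mul]
      _ ≤ M * |Ai y - F (max 1 R) y| := mul_le_mul_of_nonneg_right hyM (abs_nonneg _)
      _ < M * (ε / M) := by
          exact mul_lt_mul_of_pos_left hd hM0
      _ = ε := by field_simp
  have hK : ∀ y : ℝ, Tendsto (fun R => K R y) atTop (𝓝 (Ai' y)) := by
    intro y
    have h1 : Tendsto (fun R => G (max 1 R) y) atTop (𝓝 (Ai' y)) := (tendsto_G y).comp hmax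
    have h2 : Tendsto
        (fun R : ℝ => Real.cos ((max 1 R) ^ 3 / 3 + y * (max 1 R)) / (max 1 R)) atTop
        (𝓝 0) := by
      apply squeeze_zero_norm (a := fun R : ℝ => (max 1 R)⁻¹)
        (t₀ := atTop) ?_ (tendsto_inv_atTop_zero.comp hmax)
      intro R
      have h1R : (1:ℝ) ≤ max 1 R := le_max_left _ _
      have h0R : (0:ℝ) < max 1 R := lt_of_lt_of_le one_pos h1R
      show ‖Real.cos (max 1 R ^ 3 / 3 + y * max 1 R) / max 1 R‖ ≤ (max 1 R)⁻¹
      rw [Real.norm_eq_abs, abs_div, abs_of_pos h0R, ← one_div]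
      gcongr
      exact Real.abs_cos_le_one _
    have h3 := h1.sub h2
    rw [sub_zero] at h3
    exact h3
  have hd2 : HasDerivAt Ai' (x₀ * Ai x₀) x₀ :=
    hasDerivAt_of_tendstoUniformlyOn hs hxFu
      (Eventually.of_forall fun R y _ => hasDerivAt_K R y) (fun y _ => hK y) hx₀
  exact ⟨hd1, hd2⟩

theorem airy_ODE :
    Differentiable ℝ Ai ∧ Differentiable ℝ (deriv Ai) ∧
      ∀ x : ℝ, deriv (deriv Ai) x = x * Ai x := by
  have h1 : ∀ x, HasDerivAt Ai (Ai' x) x := fun x => (airy_derivs x).1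
  have h2 : ∀ x, HasDerivAt Ai' (x * Ai x) x := fun x => (airy_derivs x).2
  have hd : deriv Ai = Ai' := funext fun x => (h1 x).deriv
  refine ⟨fun x => (h1 x).differentiableAt, ?_, ?_⟩
  · rw [hd]
    exact fun x => (h2 x).differentiableAt
  · intro x
    rw [hd]
    exact (h2 x).deriv
end

section
/- The space of bounded solutions of the Airy differential equation is at most one-dimensional: if y₁, y₂ : ℝ → ℝ are twice differentiable functions satisfying y₁''(x) = x·y₁(x) and y₂''(x) = x·y₂(x) for all real x, and both y₁ and y₂ are bounded on ℝ, then y₁ and y₂ are linearly dependent over ℝ. -/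
lemma airy_unique (y : ℝ → ℝ) (hy : Differentiable ℝ y) (hy' : Differentiable ℝ (deriv y))
    (ode : ∀ x : ℝ, deriv (deriv y) x = x * y x) (h0 : y 0 = 0) (h0' : deriv y 0 = 0) :
    ∀ x : ℝ, y x = 0 := by
  set E : ℝ → ℝ := fun t => y t * y t + deriv y t * deriv y t with hEdef
  have hE : ∀ t : ℝ, HasDerivAt E (2 * (1 + t) * (y t * deriv y t)) t := by
    intro t
    have h1 := ((hy t).hasDerivAt.mul (hy t).hasDerivAt).add
      ((hy' t).hasDerivAt.mul (hy' t).hasDerivAt)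
    exact h1.congr_deriv (by rw [ode t]; ring)
  have hEnonneg : ∀ t, 0 ≤ E t := fun t =>
    add_nonneg (mul_self_nonneg _) (mul_self_nonneg _)
  have hE0 : E 0 = 0 := by simp [hEdef, h0, h0']
  intro p
  have key : E p = 0 := by
    rcases le_or_gt 0 p with hp | hp
    · -- forward direction: g t = E t * exp (-(1+p) t) antitone on [0,p]
      set C : ℝ := 1 + p with hC
      set g : ℝ → ℝ := fun t => E t * Real.exp (-C * t) with hg
      have hgd : ∀ t : ℝ, HasDerivAt g
          ((2 * (1 + t) * (y t * deriv y t) - C * E t) * Real.exp (-C * t)) t := by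
        intro t
        have he := (((hasDerivAt_id t).const_mul (-C)).exp)
        have := (hE t).mul he
        simp only [mul_one, id] at this
        exact this.congr_deriv (by ring)
      have hanti : AntitoneOn g (Set.Icc 0 p) := by
        apply antitoneOn_of_deriv_nonpos (convex_Icc 0 p)
        · exact fun t _ => ((hgd t).continuousAt).continuousWithinAt
        · exact fun t _ => ((hgd t).differentiableAt).differentiableWithinAt
        · intro t ht
          rw [interior_Icc] at ht
          rw [(hgd t).deriv]
          apply mul_nonpos_of_nonpos_of_nonneg _ (Real.exp_nonneg _)
          simp only [hEdef]
          have h1t : 0 ≤ 1 + t := by linarith [ht.1]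
          have htC : 1 + t ≤ C := by simp only [hC]; linarith [ht.2]
          have hsq : 0 ≤ (y t - deriv y t) * (y t - deriv y t) := mul_self_nonneg _
          nlinarith [mul_nonneg (sub_nonneg.2 htC) (add_nonneg (mul_self_nonneg (y t)) (mul_self_nonneg (deriv y t))), mul_nonneg h1t hsq]
      have := hanti (Set.left_mem_Icc.2 hp) (Set.right_mem_Icc.2 hp) hp
      have hgp : g p ≤ 0 := by simpa [hg, hE0] using this
      have : 0 ≤ g p := mul_nonneg (hEnonneg p) (Real.exp_nonneg _)
      have hgp0 : g p = 0 := le_antisymm hgp this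
      have := Real.exp_pos (-C * p)
      have : E p * Real.exp (-C * p) = 0 := hgp0
      exact (mul_eq_zero.1 this).resolve_right (Real.exp_pos _).ne'
    · -- backward: g t = E t * exp (C t) monotone on [p, 0], C = 1 - p
      set C : ℝ := 1 - p with hC
      set g : ℝ → ℝ := fun t => E t * Real.exp (C * t) with hg
      have hgd : ∀ t : ℝ, HasDerivAt g
          ((2 * (1 + t) * (y t * deriv y t) + C * E t) * Real.exp (C * t)) t := by
        intro t
        have he := (((hasDerivAt_id t).const_mul C).exp)
        have := (hE t).mul he
        simp only [mul_one, id] at this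
        exact this.congr_deriv (by ring)
      have hmono : MonotoneOn g (Set.Icc p 0) := by
        apply monotoneOn_of_deriv_nonneg (convex_Icc p 0)
        · exact fun t _ => ((hgd t).continuousAt).continuousWithinAt
        · exact fun t _ => ((hgd t).differentiableAt).differentiableWithinAt
        · intro t ht
          rw [interior_Icc] at ht
          rw [(hgd t).deriv]
          apply mul_nonneg _ (Real.exp_nonneg _)
          simp only [hEdef]
          -- need 2(1+t) y y' + C E ≥ 0, with |1+t| ≤ C
          have h1 : -C ≤ 1 + t := by simp only [hC]; linarith [ht.1]
          have h2 : 1 + t ≤ C := by simp only [hC]; linarith [ht.2, hp.le]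
          have hsq1 : 0 ≤ (y t - deriv y t) * (y t - deriv y t) := mul_self_nonneg _
          have hsq2 : 0 ≤ (y t + deriv y t) * (y t + deriv y t) := mul_self_nonneg _
          nlinarith [mul_nonneg (sub_nonneg.2 h2) hsq1, mul_nonneg (by linarith : (0:ℝ) ≤ C + (1+t)) hsq2,
            mul_nonneg (sub_nonneg.2 h2) (add_nonneg (mul_self_nonneg (y t)) (mul_self_nonneg (deriv y t)))]
      have := hmono (Set.left_mem_Icc.2 hp.le) (Set.right_mem_Icc.2 hp.le) hp.le
      have hgp : g p ≤ 0 := by simpa [hg, hE0] using this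
      have : 0 ≤ g p := mul_nonneg (hEnonneg p) (Real.exp_nonneg _)
      have hgp0 : g p = 0 := le_antisymm hgp this
      have : E p * Real.exp (C * p) = 0 := hgp0
      exact (mul_eq_zero.1 this).resolve_right (Real.exp_pos _).ne'
  have key' : y p * y p + deriv y p * deriv y p = 0 := by simpa [hEdef] using key
  nlinarith [mul_self_nonneg (y p), mul_self_nonneg (deriv y p), key']


lemma airy_growth (y : ℝ → ℝ) (hy : Differentiable ℝ y) (hy' : Differentiable ℝ (deriv y))
    (ode : ∀ x : ℝ, deriv (deriv y) x = x * y x) (h0 : 1 ≤ y 0) (h0' : 1 ≤ deriv y 0) :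
    ∀ x : ℝ, 0 ≤ x → 1 + x ≤ y x := by
  have key : ∀ x : ℝ, 0 ≤ x → 1 ≤ y x ∧ 1 ≤ deriv y x := by
    by_contra hcon
    push_neg at hcon
    obtain ⟨x₀, hx₀, hbad⟩ := hcon
    set S : Set ℝ := {x | 0 ≤ x ∧ (y x < 1 ∨ deriv y x < 1)} with hS
    have hSne : S.Nonempty := ⟨x₀, hx₀, by
      rcases lt_or_ge (y x₀) 1 with h | h
      · exact Or.inl h
      · exact Or.inr (hbad h)⟩
    have hSbdd : BddBelow S := ⟨0, fun s hs => hs.1⟩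
    set t := sInf S with ht
    have ht0 : 0 ≤ t := le_csInf hSne fun s hs => hs.1
    -- everything strictly before t is good
    have hgood : ∀ s, 0 ≤ s → s < t → 1 ≤ y s ∧ 1 ≤ deriv y s := by
      intro s hs hst
      by_contra hc
      push_neg at hc
      have hsS : s ∈ S := by
        refine ⟨hs, ?_⟩
        rcases lt_or_ge (y s) 1 with h | h
        · exact Or.inl h
        · exact Or.inr (hc h)
      exact absurd (csInf_le hSbdd hsS) (not_le.2 hst)
    -- at t too, by continuity
    have hyt : 1 ≤ y t ∧ 1 ≤ deriv y t := by
      rcases eq_or_lt_of_le ht0 with h | h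
      · exact h ▸ ⟨h0, h0'⟩
      · have hne : (nhdsWithin t (Set.Ico 0 t)).NeBot := by
          rw [← mem_closure_iff_nhdsWithin_neBot, closure_Ico (ne_of_lt h)]
          exact Set.right_mem_Icc.2 ht0
        constructor
        · refine ge_of_tendsto ((hy.continuous.continuousAt.continuousWithinAt : ContinuousWithinAt y (Set.Ico 0 t) t).tendsto) ?_
          filter_upwards [self_mem_nhdsWithin] with s hs
          exact (hgood s hs.1 hs.2).1
        · refine ge_of_tendsto ((hy'.continuous.continuousAt.continuousWithinAt : ContinuousWithinAt (deriv y) (Set.Ico 0 t) t).tendsto) ?_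
          filter_upwards [self_mem_nhdsWithin] with s hs
          exact (hgood s hs.1 hs.2).2
    -- positivity of y near t, to the right
    have hcont : ContinuousAt y t := hy.continuous.continuousAt
    obtain ⟨δ, hδpos, hδ⟩ := Metric.continuousAt_iff.1 hcont (1/2) (by norm_num)
    have hpos : ∀ s ∈ Set.Icc t (t + δ/2), 0 < y s := by
      intro s hs
      have : |s - t| < δ := by
        rw [abs_sub_lt_iff]; constructor <;> [skip; skip] <;>
          simp only [Set.mem_Icc] at hs <;> linarith [hδpos]
      have := hδ (by simpa [Real.dist_eq] using this)
      rw [Real.dist_eq, abs_sub_lt_iff] at this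
      linarith [hyt.1]
    -- deriv y is monotone on [t, t+δ/2]
    have hmono' : MonotoneOn (deriv y) (Set.Icc t (t + δ/2)) := by
      apply monotoneOn_of_deriv_nonneg (convex_Icc _ _)
        (hy'.continuous.continuousOn) (hy'.differentiableOn)
      intro s hs
      rw [interior_Icc] at hs
      rw [ode s]
      exact mul_nonneg (le_trans ht0 hs.1.le) (hpos s ⟨hs.1.le, hs.2.le⟩).le
    have hd1 : ∀ s ∈ Set.Icc t (t + δ/2), 1 ≤ deriv y s := by
      intro s hs
      calc 1 ≤ deriv y t := hyt.2
        _ ≤ deriv y s := hmono' (Set.left_mem_Icc.2 (by linarith)) hs hs.1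
    have hmono : MonotoneOn y (Set.Icc t (t + δ/2)) := by
      apply monotoneOn_of_deriv_nonneg (convex_Icc _ _)
        (hy.continuous.continuousOn) (hy.differentiableOn)
      intro s hs
      rw [interior_Icc] at hs
      linarith [hd1 s ⟨hs.1.le, hs.2.le⟩]
    have hy1 : ∀ s ∈ Set.Icc t (t + δ/2), 1 ≤ y s := by
      intro s hs
      calc 1 ≤ y t := hyt.1
        _ ≤ y s := hmono (Set.left_mem_Icc.2 (by linarith)) hs hs.1
    -- now find a point of S in [t, t+δ/2): contradiction
    obtain ⟨s, hsS, hslt⟩ := (csInf_lt_iff hSbdd hSne).1 (by linarith : sInf S < t + δ/2)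
    have hst : t ≤ s := csInf_le hSbdd hsS
    have hsmem : s ∈ Set.Icc t (t + δ/2) := ⟨hst, hslt.le⟩
    rcases hsS.2 with h | h
    · exact absurd (hy1 s hsmem) (not_le.2 h)
    · exact absurd (hd1 s hsmem) (not_le.2 h)
  -- conclude linear growth
  intro x hx
  have hd : ∀ s : ℝ, HasDerivAt (fun s => y s - s) (deriv y s - 1) s :=
    fun s => ((hy s).hasDerivAt).sub (hasDerivAt_id s)
  have hg : MonotoneOn (fun s => y s - s) (Set.Icc 0 x) := by
    apply monotoneOn_of_deriv_nonneg (convex_Icc _ _)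
      (fun s _ => ((hd s).differentiableAt).continuousAt.continuousWithinAt)
      (fun s _ => ((hd s).differentiableAt).differentiableWithinAt)
    intro s hs
    rw [interior_Icc] at hs
    rw [(hd s).deriv]
    linarith [(key s hs.1.le).2]
  have := hg (Set.left_mem_Icc.2 hx) (Set.right_mem_Icc.2 hx) hx
  simp only at this
  linarith


lemma airy_combo (y₁ y₂ : ℝ → ℝ)
    (h₁ : Differentiable ℝ y₁) (h₁' : Differentiable ℝ (deriv y₁))
    (h₂ : Differentiable ℝ y₂) (h₂' : Differentiable ℝ (deriv y₂))
    (ode₁ : ∀ x : ℝ, deriv (deriv y₁) x = x * y₁ x)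
    (ode₂ : ∀ x : ℝ, deriv (deriv y₂) x = x * y₂ x) (a b : ℝ) :
    Differentiable ℝ (fun x => a * y₁ x + b * y₂ x) ∧
    deriv (fun x => a * y₁ x + b * y₂ x) = (fun x => a * deriv y₁ x + b * deriv y₂ x) ∧
    Differentiable ℝ (deriv (fun x => a * y₁ x + b * y₂ x)) ∧
    (∀ x : ℝ, deriv (deriv (fun x => a * y₁ x + b * y₂ x)) x = x * (a * y₁ x + b * y₂ x)) := by
  have hd : ∀ x : ℝ, HasDerivAt (fun x => a * y₁ x + b * y₂ x)
      (a * deriv y₁ x + b * deriv y₂ x) x := fun x =>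
    (((h₁ x).hasDerivAt).const_mul a).add (((h₂ x).hasDerivAt).const_mul b)
  have hD : deriv (fun x => a * y₁ x + b * y₂ x) = fun x => a * deriv y₁ x + b * deriv y₂ x :=
    funext fun x => (hd x).deriv
  have hd2 : ∀ x : ℝ, HasDerivAt (fun x => a * deriv y₁ x + b * deriv y₂ x)
      (a * deriv (deriv y₁) x + b * deriv (deriv y₂) x) x := fun x =>
    (((h₁' x).hasDerivAt).const_mul a).add (((h₂' x).hasDerivAt).const_mul b)
  refine ⟨fun x => (hd x).differentiableAt, hD, ?_, ?_⟩
  · rw [hD]; exact fun x => (hd2 x).differentiableAt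
  · intro x
    rw [hD, (hd2 x).deriv, ode₁ x, ode₂ x]; ring

theorem bounded_airy_solutions_dependent
    (y₁ y₂ : ℝ → ℝ)
    (h₁ : Differentiable ℝ y₁) (h₁' : Differentiable ℝ (deriv y₁))
    (h₂ : Differentiable ℝ y₂) (h₂' : Differentiable ℝ (deriv y₂))
    (ode₁ : ∀ x : ℝ, deriv (deriv y₁) x = x * y₁ x)
    (ode₂ : ∀ x : ℝ, deriv (deriv y₂) x = x * y₂ x)
    (b₁ : ∃ M : ℝ, ∀ x : ℝ, |y₁ x| ≤ M)
    (b₂ : ∃ M : ℝ, ∀ x : ℝ, |y₂ x| ≤ M) :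
    ∃ a b : ℝ, (a ≠ 0 ∨ b ≠ 0) ∧ ∀ x : ℝ, a * y₁ x + b * y₂ x = 0 := by
  set W0 : ℝ := y₁ 0 * deriv y₂ 0 - y₂ 0 * deriv y₁ 0 with hW0
  by_cases hW : W0 = 0
  · -- Wronskian vanishes at 0: initial-condition vectors are dependent
    by_cases hz : y₁ 0 = 0 ∧ deriv y₁ 0 = 0
    · exact ⟨1, 0, Or.inl one_ne_zero, fun x => by
        have := airy_unique y₁ h₁ h₁' ode₁ hz.1 hz.2 x
        rw [this]; ring⟩
    · -- choose a, b not both zero killing initial conditions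
      obtain ⟨a, b, hab, hic1, hic2⟩ :
          ∃ a b : ℝ, (a ≠ 0 ∨ b ≠ 0) ∧ a * y₁ 0 + b * y₂ 0 = 0 ∧
            a * deriv y₁ 0 + b * deriv y₂ 0 = 0 := by
        by_cases h10 : y₁ 0 = 0
        · have h1d : deriv y₁ 0 ≠ 0 := fun h => hz ⟨h10, h⟩
          refine ⟨deriv y₂ 0, -(deriv y₁ 0), Or.inr (by simpa using h1d), ?_, by ring⟩
          have : y₂ 0 * deriv y₁ 0 = 0 := by
            have : W0 = -(y₂ 0 * deriv y₁ 0) := by rw [hW0, h10]; ring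
            rw [this] at hW; linarith [hW]
          rcases mul_eq_zero.1 this with h | h
          · rw [h10, h]; ring
          · exact absurd h h1d
        · refine ⟨y₂ 0, -(y₁ 0), Or.inr (by simpa using h10), by ring, ?_⟩
          have : y₂ 0 * deriv y₁ 0 - y₁ 0 * deriv y₂ 0 = 0 := by
            rw [hW0] at hW; linarith
          linarith [this]
      obtain ⟨hyD, hDeq, hyD', hode⟩ := airy_combo y₁ y₂ h₁ h₁' h₂ h₂' ode₁ ode₂ a b
      refine ⟨a, b, hab, ?_⟩
      have h0' : deriv (fun x => a * y₁ x + b * y₂ x) 0 = 0 := by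
        rw [hDeq]; exact hic2
      exact airy_unique _ hyD hyD' hode hic1 h0'
  · -- Wronskian nonzero: build a bounded solution with y(0)=y'(0)=1, contradiction
    exfalso
    set a : ℝ := (deriv y₂ 0 - y₂ 0) / W0 with ha
    set b : ℝ := (y₁ 0 - deriv y₁ 0) / W0 with hb
    obtain ⟨hyD, hDeq, hyD', hode⟩ := airy_combo y₁ y₂ h₁ h₁' h₂ h₂' ode₁ ode₂ a b
    have h0 : a * y₁ 0 + b * y₂ 0 = 1 := by
      rw [ha, hb]; field_simp; rw [hW0]; ring
    have h0' : deriv (fun x => a * y₁ x + b * y₂ x) 0 = 1 := by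
      rw [hDeq]; simp only [ha, hb]; field_simp; rw [hW0]; ring
    have growth := airy_growth _ hyD hyD' hode (le_of_eq h0.symm) (le_of_eq h0'.symm)
    obtain ⟨M₁, hM₁⟩ := b₁
    obtain ⟨M₂, hM₂⟩ := b₂
    set B : ℝ := |a| * M₁ + |b| * M₂ with hB
    have hM₁0 : 0 ≤ M₁ := le_trans (abs_nonneg _) (hM₁ 0)
    have hM₂0 : 0 ≤ M₂ := le_trans (abs_nonneg _) (hM₂ 0)
    have hB0 : 0 ≤ B := add_nonneg (mul_nonneg (abs_nonneg _) hM₁0)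
      (mul_nonneg (abs_nonneg _) hM₂0)
    have hle := growth B hB0
    have hbd : a * y₁ B + b * y₂ B ≤ B := by
      calc a * y₁ B + b * y₂ B ≤ |a * y₁ B + b * y₂ B| := le_abs_self _
        _ ≤ |a * y₁ B| + |b * y₂ B| := abs_add_le _ _
        _ = |a| * |y₁ B| + |b| * |y₂ B| := by rw [abs_mul, abs_mul]
        _ ≤ |a| * M₁ + |b| * M₂ := by
            gcongr <;> [exact hM₁ B; exact hM₂ B]
        _ = B := rfl
    linarith
end

section
/- For every real x > 0, the Airy function admits the exact Gaussian-type representation Ai(x) = e^{−(2/3)x^{3/2}} · x^{−1/4}/(2√2) · ∫_{−∞}^{∞} e^{−t²/2} · e^{i·x^{−3/4}·t³/(6√2)} dt, where the integral on the right-hand side is an absolutely convergent integral of a complex-valued function and the identity is an equality of complex numbers (the right-hand side being real). -/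
open Filter intervalIntegral MeasureTheory
open Set Topology

private lemma airy_key1 (t b : ℂ) :
    Complex.I * ((t + b*Complex.I)^3/3 + b^2*(t + b*Complex.I)) =
      -(2/3)*b^3 + (-(b*t^2) + Complex.I*t^3/3) := by
  linear_combination (b*t^2 + b^2*t*Complex.I + b^3/3*(Complex.I^2+2)) * Complex.I_sq

private lemma airy_key2 (y b : ℂ) :
    Complex.I * ((y*Complex.I)^3/3 + b^2*(y*Complex.I)) = y^3/3 - b^2*y := by
  linear_combination (y^3*(Complex.I^2-1)/3 + b^2*y) * Complex.I_sq

private lemma airy_key3 (R y b : ℂ) :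
    Complex.I * ((R + y*Complex.I)^3/3 + b^2*(R + y*Complex.I)) =
      -(R^2*y - y^3/3 + b^2*y) + (R^3/3 - R*y^2 + b^2*R)*Complex.I := by
  linear_combination (R^2*y + R*y^2*Complex.I + y^3/3*(Complex.I^2-1) + b^2*y) * Complex.I_sq

theorem airy_gaussian_representation (x : ℝ) (hx : 0 < x) :
    (Ai x : ℂ) =
      (Real.exp (-(2 / 3) * x ^ ((3:ℝ)/2)) * x ^ (-(1:ℝ)/4) / (2 * Real.sqrt 2) : ℝ) *
        ∫ t : ℝ, Complex.exp (-(t:ℂ) ^ 2 / 2) *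
          Complex.exp (Complex.I * (x ^ (-(3:ℝ)/4) : ℝ) * (t:ℂ) ^ 3 / (6 * (Real.sqrt 2 : ℂ))) := by
  set b := Real.sqrt x with hbdef
  have hb : 0 < b := Real.sqrt_pos.mpr hx
  have hx2 : (x:ℂ) = (b:ℂ)^2 := by
    rw [← Complex.ofReal_pow, Real.sq_sqrt hx.le]
  set f : ℂ → ℂ := fun z => Complex.exp (Complex.I * (z^3/3 + x*z)) with hfdef
  have hf_diff : Differentiable ℂ f := by
    apply Complex.differentiable_exp.comp
    fun_prop
  have hfc : Continuous f := hf_diff.continuous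
  set g : ℝ → ℂ := fun t => Complex.exp (-(b:ℂ)*t^2 + Complex.I*t^3/3) with hgdef
  have hgc : Continuous g := by
    apply Complex.continuous_exp.comp
    fun_prop
  have hg_eq : ∀ t : ℝ, f ((t:ℂ) + (b:ℂ) * Complex.I) = (Real.exp (-(2/3)*b^3) : ℝ) * g t := by
    intro t
    simp only [hfdef, hgdef]
    rw [show Complex.I * (((t:ℂ) + (b:ℂ)*Complex.I)^3/3 + (x:ℂ)*((t:ℂ) + (b:ℂ)*Complex.I)) =
        ((-(2/3)*b^3 : ℝ) : ℂ) + (-(b:ℂ)*(t:ℂ)^2 + Complex.I*(t:ℂ)^3/3) from by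
      rw [hx2]; push_cast; linear_combination airy_key1 (t:ℂ) (b:ℂ)]
    rw [Complex.exp_add, Complex.ofReal_exp]
  have hg_norm : ∀ t : ℝ, ‖g t‖ = Real.exp (-b * t^2) := by
    intro t
    simp only [hgdef]
    rw [Complex.norm_exp]
    congr 1
    simp [← Complex.ofReal_pow]
  have hgauss : Integrable (fun t : ℝ => Real.exp (-b * t^2)) := integrable_exp_neg_mul_sq hb
  have hg_int_full : Integrable g := by
    refine hgauss.mono' hgc.aestronglyMeasurable ?_
    filter_upwards with t
    rw [hg_norm t]
  have hg_int : IntegrableOn g (Ioi 0) := hg_int_full.integrableOn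
  -- the rectangle identity
  have hrect : ∀ R : ℝ, (∫ t in (0:ℝ)..R, f t) =
      (∫ t in (0:ℝ)..R, f ((t:ℂ) + (b:ℂ) * Complex.I))
        - Complex.I • (∫ y in (0:ℝ)..b, f ((R:ℂ) + (y:ℂ) * Complex.I))
        + Complex.I • (∫ y in (0:ℝ)..b, f ((y:ℂ) * Complex.I)) := by
    intro R
    have h0 := Complex.integral_boundary_rect_eq_zero_of_differentiableOn f 0
      (⟨R, b⟩ : ℂ) hf_diff.differentiableOn
    have hre : (⟨R, b⟩ : ℂ).re = R := rfl
    have him : (⟨R, b⟩ : ℂ).im = b := rfl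
    rw [hre, him, Complex.zero_re, Complex.zero_im] at h0
    simp only [Complex.ofReal_zero, zero_mul, add_zero, zero_add] at h0
    linear_combination h0
  -- norm on vertical segments
  have hfnorm : ∀ R y : ℝ, ‖f ((R:ℂ) + (y:ℂ) * Complex.I)‖
      = Real.exp (-(R^2*y - y^3/3 + b^2*y)) := by
    intro R y
    simp only [hfdef]
    rw [Complex.norm_exp,
      show Complex.I * (((R:ℂ) + (y:ℂ)*Complex.I)^3/3 + (x:ℂ)*((R:ℂ) + (y:ℂ)*Complex.I)) =
          ((-(R^2*y - y^3/3 + b^2*y) : ℝ) : ℂ) + ((R^3/3 - R*y^2 + b^2*R : ℝ):ℂ)*Complex.I from by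
        rw [hx2]; push_cast; linear_combination airy_key3 (R:ℂ) (y:ℂ) (b:ℂ)]
    simp [← Complex.ofReal_pow]
  -- the horizontal piece converges
  have hT1 : Tendsto (fun R : ℝ => ∫ t in (0:ℝ)..R, f ((t:ℂ) + (b:ℂ) * Complex.I)) atTop
      (𝓝 (((Real.exp (-(2/3)*b^3) : ℝ) : ℂ) * ∫ t in Ioi (0:ℝ), g t)) := by
    have h1 : Tendsto (fun R : ℝ => ∫ t in (0:ℝ)..R, g t) atTop
        (𝓝 (∫ t in Ioi (0:ℝ), g t)) :=
      intervalIntegral_tendsto_integral_Ioi 0 hg_int tendsto_id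
    have h2 := h1.const_mul (((Real.exp (-(2/3)*b^3) : ℝ)) : ℂ)
    refine h2.congr fun R => ?_
    rw [← intervalIntegral.integral_const_mul]
    exact intervalIntegral.integral_congr fun t _ => (hg_eq t).symm
  -- the vertical piece tends to zero
  have hvert : Tendsto (fun R : ℝ =>
      Complex.I • (∫ y in (0:ℝ)..b, f ((R:ℂ) + (y:ℂ) * Complex.I))) atTop (𝓝 0) := by
    apply squeeze_zero_norm' (a := fun R : ℝ => (R^2)⁻¹)
    · filter_upwards [eventually_ge_atTop (1:ℝ)] with R hR
      have hR0 : (0:ℝ) < R := lt_of_lt_of_le one_pos hR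
      have hR2 : (0:ℝ) < R^2 := pow_pos hR0 2
      rw [norm_smul, Complex.norm_I, one_mul]
      have step1 : ‖∫ y in (0:ℝ)..b, f ((R:ℂ) + (y:ℂ) * Complex.I)‖
          ≤ ∫ y in (0:ℝ)..b, Real.exp (-R^2 * y) := by
        refine le_trans (intervalIntegral.norm_integral_le_abs_of_norm_le ?_ ?_)
          (le_of_eq (abs_of_nonneg (intervalIntegral.integral_nonneg hb.le
            fun u _ => (Real.exp_pos _).le)))
        · filter_upwards [ae_restrict_mem measurableSet_uIoc] with y hy
          rw [Set.uIoc_of_le hb.le] at hy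
          rw [hfnorm]
          apply Real.exp_le_exp.mpr
          have h1 : 0 < y := hy.1
          have h2 : y ≤ b := hy.2
          nlinarith [mul_le_mul_of_nonneg_left (mul_self_le_mul_self h1.le h2) h1.le,
            mul_pos (mul_pos hb hb) h1]
        · exact (Real.continuous_exp.comp (by fun_prop)).intervalIntegrable _ _
      refine step1.trans ?_
      have hc : (-R^2 : ℝ) ≠ 0 := by nlinarith
      rw [intervalIntegral.integral_comp_mul_left Real.exp hc, integral_exp]
      have h1 : (0:ℝ) ≤ Real.exp (-R ^ 2 * b) := (Real.exp_pos _).le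
      have hni : ((-R^2 : ℝ))⁻¹ = -(R^2)⁻¹ := by rw [neg_inv]
      rw [smul_eq_mul, hni, mul_zero, Real.exp_zero]
      have h3 : (R^2)⁻¹ * (1 - Real.exp (-R^2*b)) ≤ (R^2)⁻¹ * 1 := by
        apply mul_le_mul_of_nonneg_left _ (inv_nonneg.mpr hR2.le)
        linarith
      nlinarith [h3]
    · have h : Tendsto (fun R : ℝ => R^2) atTop atTop := tendsto_pow_atTop two_ne_zero
      simpa [Pi.inv_def] using h.inv_tendsto_atTop
  -- the limit of the contour integrals
  have hT : Tendsto (fun R : ℝ => ∫ t in (0:ℝ)..R, f t) atTop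
      (𝓝 (((Real.exp (-(2/3)*b^3) : ℝ) : ℂ) * (∫ t in Ioi (0:ℝ), g t)
        + Complex.I • (∫ y in (0:ℝ)..b, f ((y:ℂ) * Complex.I)))) := by
    have h := (hT1.sub hvert).add
      (tendsto_const_nhds (x := Complex.I • (∫ y in (0:ℝ)..b, f ((y:ℂ) * Complex.I)))
        (f := atTop (α := ℝ)))
    rw [sub_zero] at h
    refine h.congr fun R => ?_
    rw [← hrect R]
  -- the vertical segment at 0 is real
  have hD : (∫ y in (0:ℝ)..b, f ((y:ℂ) * Complex.I))
      = (((∫ y in (0:ℝ)..b, Real.exp (y^3/3 - x*y)) : ℝ) : ℂ) := by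
    rw [← intervalIntegral.integral_ofReal]
    apply intervalIntegral.integral_congr
    intro y _
    simp only [hfdef]
    rw [show Complex.I * (((y:ℂ)*Complex.I)^3/3 + (x:ℂ)*((y:ℂ)*Complex.I))
        = ((y^3/3 - x*y : ℝ):ℂ) from by
      push_cast; rw [hx2]; linear_combination airy_key2 (y:ℂ) (b:ℂ)]
    rw [Complex.ofReal_exp]
  -- real parts of the integrands on the real axis
  have hcos : ∀ R : ℝ, (∫ t in (0:ℝ)..R, Real.cos (t ^ 3 / 3 + x * t))
      = (∫ t in (0:ℝ)..R, f (t:ℂ)).re := by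
    intro R
    have hint : IntervalIntegrable (fun t : ℝ => f (t:ℂ)) volume 0 R :=
      ((hfc.comp Complex.continuous_ofReal).intervalIntegrable _ _)
    rw [show (∫ t in (0:ℝ)..R, f (t:ℂ)).re
        = ∫ t in (0:ℝ)..R, Complex.reCLM (f (t:ℂ)) from
      (Complex.reCLM.intervalIntegral_comp_comm hint).symm]
    apply intervalIntegral.integral_congr
    intro t _
    simp only [hfdef, Complex.reCLM_apply]
    rw [show Complex.I * ((t:ℂ)^3/3 + (x:ℂ)*(t:ℂ)) = ((t^3/3 + x*t : ℝ):ℂ)*Complex.I from by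
      push_cast; ring]
    rw [Complex.exp_ofReal_mul_I_re]
  -- value of the Airy limit
  have hAi_eq : Ai x = Real.exp (-(2/3)*b^3) * (∫ t in Ioi (0:ℝ), g t).re := by
    apply Filter.Tendsto.limUnder_eq
    have h := (Complex.continuous_re.tendsto _).comp hT
    have h2 := h.congr fun R => (hcos R).symm
    convert h2 using 2
    rw [hD]
    simp [smul_eq_mul, Complex.add_re, Complex.mul_re, Complex.I_re, Complex.I_im,
      Complex.ofReal_re, Complex.ofReal_im, -Complex.ofReal_exp]
  -- symmetry: the full-line integral is twice the real part of the half-line integral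
  have hconjg : ∀ t : ℝ, (starRingEnd ℂ) (g t) = g (-t) := by
    intro t
    simp only [hgdef]
    rw [← Complex.exp_conj]
    congr 1
    push_cast
    simp only [map_add, map_mul, map_neg, map_div₀, map_pow, Complex.conj_I,
      Complex.conj_ofReal, map_ofNat]
    ring
  have hIic : ∫ t in Iic (0:ℝ), g t = (starRingEnd ℂ) (∫ t in Ioi (0:ℝ), g t) := by
    have h1 : ∫ t in Iic (0:ℝ), g t = ∫ t in Iic (0:ℝ), (starRingEnd ℂ) (g (-t)) :=
      MeasureTheory.setIntegral_congr_fun measurableSet_Iic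
        (fun t _ => by rw [hconjg, neg_neg])
    rw [h1]
    rw [show (∫ t in Iic (0:ℝ), (starRingEnd ℂ) (g (-t)))
        = ∫ t in Ioi (-(0:ℝ)), (starRingEnd ℂ) (g t) from
      integral_comp_neg_Iic 0 fun t => (starRingEnd ℂ) (g t)]
    rw [neg_zero, integral_conj]
  have hfull : (∫ t : ℝ, g t) = ((2 * (∫ t in Ioi (0:ℝ), g t).re : ℝ) : ℂ) := by
    rw [← integral_Iic_add_Ioi hg_int_full.integrableOn hg_int, hIic, add_comm,
      Complex.add_conj]
  -- the change of variables
  have hq : (0:ℝ) < x ^ ((1:ℝ)/4) := Real.rpow_pos_of_pos hx _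
  have hs2 : (0:ℝ) < Real.sqrt 2 := Real.sqrt_pos.mpr two_pos
  have h14 : (x ^ ((1:ℝ)/4))^2 = x ^ ((1:ℝ)/2) := by
    rw [← Real.rpow_natCast (x ^ ((1:ℝ)/4)) 2, ← Real.rpow_mul hx.le]; norm_num
  have h34 : (x ^ ((1:ℝ)/4))^3 = x ^ ((3:ℝ)/4) := by
    rw [← Real.rpow_natCast (x ^ ((1:ℝ)/4)) 3, ← Real.rpow_mul hx.le]; norm_num
  have hbr : b = x ^ ((1:ℝ)/2) := by
    rw [hbdef, Real.sqrt_eq_rpow]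
  have hx12 : (0:ℝ) < x ^ ((1:ℝ)/2) := Real.rpow_pos_of_pos hx _
  have hx34 : (0:ℝ) < x ^ ((3:ℝ)/4) := Real.rpow_pos_of_pos hx _
  have hsq2 : Real.sqrt 2 ^ 2 = 2 := Real.sq_sqrt two_pos.le
  have hsq3 : Real.sqrt 2 ^ 3 = 2 * Real.sqrt 2 := by
    rw [pow_succ, hsq2]
  have hneg34 : x ^ (-(3:ℝ)/4) = (x ^ ((3:ℝ)/4))⁻¹ := by
    rw [show (-(3:ℝ)/4) = -((3:ℝ)/4) by norm_num, Real.rpow_neg hx.le]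
  have hneg14 : x ^ (-(1:ℝ)/4) = (x ^ ((1:ℝ)/4))⁻¹ := by
    rw [show (-(1:ℝ)/4) = -((1:ℝ)/4) by norm_num, Real.rpow_neg hx.le]
  set a : ℝ := (Real.sqrt 2 * x ^ ((1:ℝ)/4))⁻¹ with hadef
  have hapos : 0 < a := inv_pos.mpr (mul_pos hs2 hq)
  have h1r : b * a^2 = 1/2 := by
    have hm : (Real.sqrt 2 * x ^ ((1:ℝ)/4))^2 = 2 * x ^ ((1:ℝ)/2) := by
      rw [mul_pow, hsq2, h14]
    rw [hadef, inv_pow, hm, hbr]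
    field_simp
  have h2r : a^3/3 = x ^ (-(3:ℝ)/4)/(6*Real.sqrt 2) := by
    have hm : (Real.sqrt 2 * x ^ ((1:ℝ)/4))^3 = 2*Real.sqrt 2 * x ^ ((3:ℝ)/4) := by
      rw [mul_pow, hsq3, h34]
    rw [hadef, inv_pow, hm, hneg34]
    rw [div_eq_div_iff (by positivity) (by positivity)]
    field_simp
    ring
  have hc1 : (b:ℂ) * (a:ℂ)^2 = 1/2 := by
    rw [← Complex.ofReal_pow, ← Complex.ofReal_mul, h1r]
    norm_num
  have hc2 : (a:ℂ)^3/3 = ((x ^ (-(3:ℝ)/4) : ℝ):ℂ)/(6*((Real.sqrt 2:ℝ):ℂ)) := by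
    have h := congrArg (Complex.ofReal) h2r
    push_cast at h
    linear_combination h
  have hpt : ∀ u : ℝ, Complex.exp (-(u:ℂ) ^ 2 / 2) *
      Complex.exp (Complex.I * ((x ^ (-(3:ℝ)/4) : ℝ) : ℂ) * (u:ℂ) ^ 3 / (6 * (Real.sqrt 2 : ℂ)))
        = g (a * u) := by
    intro u
    simp only [hgdef]
    rw [← Complex.exp_add]
    congr 1
    push_cast
    linear_combination ((u:ℂ)^2)*hc1 + (-Complex.I*(u:ℂ)^3)*hc2
  have hsub : (∫ t : ℝ, Complex.exp (-(t:ℂ) ^ 2 / 2) *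
        Complex.exp (Complex.I * ((x ^ (-(3:ℝ)/4) : ℝ) : ℂ) * (t:ℂ) ^ 3 / (6 * (Real.sqrt 2 : ℂ))))
      = ((Real.sqrt 2 * x ^ ((1:ℝ)/4) : ℝ)) • (∫ t : ℝ, g t) := by
    rw [show (fun t : ℝ => Complex.exp (-(t:ℂ) ^ 2 / 2) *
        Complex.exp (Complex.I * ((x ^ (-(3:ℝ)/4) : ℝ) : ℂ) * (t:ℂ) ^ 3 / (6 * (Real.sqrt 2 : ℂ))))
        = fun t : ℝ => g (a * t) from funext fun u => hpt u]
    rw [MeasureTheory.Measure.integral_comp_mul_left g a, hadef, inv_inv,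
      abs_of_pos (mul_pos hs2 hq)]
  -- final assembly
  rw [hAi_eq, hsub, hfull, Complex.real_smul, ← Complex.ofReal_mul, ← Complex.ofReal_mul,
    Complex.ofReal_inj]
  rw [show (-(2/3) * x ^ ((3:ℝ)/2)) = (-(2/3*b^3)) from by
    rw [hbr, ← Real.rpow_natCast (x ^ ((1:ℝ)/2)) 3, ← Real.rpow_mul hx.le]; norm_num]
  rw [hneg14]
  field_simp
end

section
/- For every natural number N, as ε → 0 in ℝ, the deformed Gaussian integral satisfies ∫_{−∞}^{∞} e^{−t²/2} · e^{i·ε·t³} dt − Σ_{j=0}^{N−1} (iε)^j / j! · ∫_{−∞}^{∞} t^{3j} · e^{−t²/2} dt = O(|ε|^N). -/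
open Filter Asymptotics MeasureTheory

lemma taylor_exp_I_bound (N : ℕ) (x : ℝ) :
    ‖Complex.exp (Complex.I * x) -
      ∑ j ∈ Finset.range N, (Complex.I * x) ^ j / (j.factorial : ℂ)‖ ≤ |x| ^ N := by
  induction N generalizing x with
  | zero => simp [Complex.norm_exp]
  | succ N ih =>
    set g : ℝ → ℂ := fun y => Complex.exp (Complex.I * y) -
        ∑ j ∈ Finset.range N, (Complex.I * y) ^ j / (j.factorial : ℂ) with hg
    set F : ℝ → ℂ := fun y => Complex.exp (Complex.I * y) -
        ∑ j ∈ Finset.range (N + 1), (Complex.I * y) ^ j / (j.factorial : ℂ) with hFdef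
    have hgc : Continuous g := by
      apply Continuous.sub
      · exact Complex.continuous_exp.comp (continuous_const.mul Complex.continuous_ofReal)
      · exact continuous_finset_sum _ fun j _ =>
          (((continuous_const.mul Complex.continuous_ofReal).pow j).div_const _)
    have hderiv : ∀ y : ℝ, HasDerivAt F (Complex.I * g y) y := by
      intro y
      have h1 : HasDerivAt (fun y : ℝ => Complex.exp (Complex.I * (y : ℂ)))
          (Complex.I * Complex.exp (Complex.I * y)) y := by
        have hlin : HasDerivAt (fun y : ℝ => (Complex.I * (y : ℂ))) Complex.I y := by
          simpa using ((hasDerivAt_id (y : ℂ)).const_mul Complex.I).comp_ofReal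
        simpa [mul_comm] using hlin.cexp
      have hterm : ∀ j : ℕ, HasDerivAt
          (fun y : ℝ => (Complex.I * (y : ℂ)) ^ j / (j.factorial : ℂ))
          ((j : ℂ) * (Complex.I * (y : ℂ)) ^ (j - 1) * Complex.I / (j.factorial : ℂ)) y := by
        intro j
        have hlin : HasDerivAt (fun z : ℂ => (Complex.I * z) ^ j / (j.factorial : ℂ))
            ((j : ℂ) * (Complex.I * (y : ℂ)) ^ (j - 1) * Complex.I / (j.factorial : ℂ)) (y : ℂ) := by
          simpa using (((hasDerivAt_id ((y:ℝ) : ℂ)).const_mul Complex.I).pow j).div_const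
            (j.factorial : ℂ)
        exact hlin.comp_ofReal
      have h2 : HasDerivAt
          (fun y : ℝ => ∑ j ∈ Finset.range (N + 1), (Complex.I * (y : ℂ)) ^ j / (j.factorial : ℂ))
          (∑ j ∈ Finset.range (N + 1),
            (j : ℂ) * (Complex.I * (y : ℂ)) ^ (j - 1) * Complex.I / (j.factorial : ℂ)) y :=
        HasDerivAt.fun_sum fun j _ => hterm j
      have hsum_eq : (∑ j ∈ Finset.range (N + 1),
            (j : ℂ) * (Complex.I * (y : ℂ)) ^ (j - 1) * Complex.I / (j.factorial : ℂ))
          = Complex.I * ∑ j ∈ Finset.range N, (Complex.I * (y : ℂ)) ^ j / (j.factorial : ℂ) := by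
        rw [Finset.sum_range_succ', Finset.mul_sum]
        simp only [Nat.cast_zero, zero_mul, zero_div, add_zero]
        refine Finset.sum_congr rfl fun i _ => ?_
        have hne : ((i + 1).factorial : ℂ) ≠ 0 := by
          exact_mod_cast Nat.factorial_ne_zero (i + 1)
        have hne' : ((i).factorial : ℂ) ≠ 0 := by
          exact_mod_cast Nat.factorial_ne_zero i
        rw [Nat.add_sub_cancel, Nat.factorial_succ]
        push_cast
        have hi : (i : ℂ) + 1 ≠ 0 := Nat.cast_add_one_ne_zero i
        rw [show ((i:ℂ)+1) * (Complex.I * (y:ℂ))^i * Complex.I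
            = ((i:ℂ)+1) * ((Complex.I * (y:ℂ))^i * Complex.I) by ring,
          mul_div_mul_left _ _ hi]
        ring
      have := h1.fun_sub h2
      rw [hsum_eq] at this
      simpa [hFdef, hg, mul_sub] using this
    have hF0 : F 0 = 0 := by
      simp [hFdef, Finset.sum_range_succ']
    have hFTC : F x - F 0 = ∫ s in (0:ℝ)..x, Complex.I * g s := by
      refine (intervalIntegral.integral_eq_sub_of_hasDerivAt
        (fun s _ => hderiv s) ?_).symm
      exact ((continuous_const.mul hgc).intervalIntegrable 0 x)
    have hbound : ‖∫ s in (0:ℝ)..x, Complex.I * g s‖ ≤ |x| ^ N * |x - 0| := by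
      apply intervalIntegral.norm_integral_le_of_norm_le_const
      intro s hs
      have hs' : |s| ≤ |x| := by
        rw [Set.uIoc] at hs
        obtain ⟨h1, h2⟩ := hs
        have hm1 : -|x| ≤ min 0 x := le_min (neg_nonpos.2 (abs_nonneg x)) (neg_abs_le x)
        have hm2 : max 0 x ≤ |x| := max_le (abs_nonneg x) (le_abs_self x)
        rw [abs_le]; constructor <;> linarith
      calc ‖Complex.I * g s‖ = ‖g s‖ := by
            rw [norm_mul, Complex.norm_I, one_mul]
        _ ≤ |s| ^ N := ih s
        _ ≤ |x| ^ N := pow_le_pow_left₀ (abs_nonneg s) hs' N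
    have : ‖F x‖ ≤ |x| ^ N * |x| := by
      rw [show F x = F x - F 0 by rw [hF0, sub_zero], hFTC]
      simpa using hbound
    calc ‖F x‖ ≤ |x| ^ N * |x| := this
      _ = |x| ^ (N + 1) := by rw [pow_succ]

lemma integ_abs_pow_gauss (n : ℕ) :
    Integrable (fun t : ℝ => |t| ^ n * Real.exp (-(1/2) * t ^ 2)) := by
  have h4 : Integrable (fun t : ℝ =>
      ((n.factorial : ℝ) * Real.exp 1) * Real.exp (-(1/4) * t ^ 2)) :=
    (integrable_exp_neg_mul_sq (by norm_num : (0:ℝ) < 1/4)).const_mul _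
  refine h4.mono' ?_ ?_
  · exact ((continuous_abs.pow n).mul
      (Real.continuous_exp.comp (continuous_const.mul (continuous_pow 2)))).aestronglyMeasurable
  · filter_upwards with t
    have h1 : |t| ^ n ≤ (n.factorial : ℝ) * Real.exp |t| := by
      have := Real.pow_div_factorial_le_exp _ (abs_nonneg t) n
      have hf : (0:ℝ) < (n.factorial : ℝ) := by exact_mod_cast n.factorial_pos
      calc |t| ^ n = (|t| ^ n / n.factorial) * n.factorial := by field_simp
        _ ≤ Real.exp |t| * n.factorial := by
            exact mul_le_mul_of_nonneg_right this hf.le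
        _ = (n.factorial : ℝ) * Real.exp |t| := by ring
    have h2 : |t| ≤ 1 + t ^ 2 / 4 := by nlinarith [sq_nonneg (|t| - 2), sq_abs t]
    have hnn : (0:ℝ) ≤ |t| ^ n * Real.exp (-(1/2) * t ^ 2) :=
      mul_nonneg (pow_nonneg (abs_nonneg t) n) (Real.exp_pos _).le
    rw [Real.norm_eq_abs, abs_of_nonneg hnn]
    calc |t| ^ n * Real.exp (-(1/2) * t ^ 2)
        ≤ ((n.factorial : ℝ) * Real.exp |t|) * Real.exp (-(1/2) * t ^ 2) :=
          mul_le_mul_of_nonneg_right h1 (Real.exp_pos _).le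
      _ = (n.factorial : ℝ) * Real.exp (|t| + -(1/2) * t ^ 2) := by
          rw [Real.exp_add]; ring
      _ ≤ (n.factorial : ℝ) * Real.exp (1 + -(1/4) * t ^ 2) := by
          have hf : (0:ℝ) ≤ (n.factorial : ℝ) := by positivity
          refine mul_le_mul_of_nonneg_left (Real.exp_le_exp.2 ?_) hf
          nlinarith
      _ = (n.factorial : ℝ) * Real.exp 1 * Real.exp (-(1/4) * t ^ 2) := by
          rw [Real.exp_add]; ring
theorem deformed_gaussian_expansion (N : ℕ) :
    (fun ε : ℝ =>
        (∫ t : ℝ, Complex.exp (-(t:ℂ) ^ 2 / 2) * Complex.exp (Complex.I * (ε:ℂ) * (t:ℂ) ^ 3)) -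
          ∑ j ∈ Finset.range N, (Complex.I * (ε:ℂ)) ^ j / (j.factorial : ℂ) *
            ∫ t : ℝ, (t:ℂ) ^ (3 * j) * Complex.exp (-(t:ℂ) ^ 2 / 2))
      =O[nhds (0:ℝ)] (fun ε : ℝ => |ε| ^ N) := by
  have hnorm : ∀ t : ℝ, ‖Complex.exp (-(t:ℂ) ^ 2 / 2)‖ = Real.exp (-(1/2) * t ^ 2) := by
    intro t
    rw [Complex.norm_exp]
    congr 1
    have : -(t:ℂ) ^ 2 / 2 = ((-(1/2) * t ^ 2 : ℝ) : ℂ) := by push_cast; ring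
    rw [this, Complex.ofReal_re]
  have hgauss : ∀ j : ℕ,
      Integrable (fun t : ℝ => (t:ℂ) ^ (3 * j) * Complex.exp (-(t:ℂ) ^ 2 / 2)) := by
    intro j
    refine (integ_abs_pow_gauss (3 * j)).mono' ?_ ?_
    · exact ((Complex.continuous_ofReal.pow _).mul
        (Complex.continuous_exp.comp
          (((Complex.continuous_ofReal.pow 2).neg).div_const 2))).aestronglyMeasurable
    · filter_upwards with t
      rw [norm_mul, hnorm t, norm_pow, Complex.norm_real, Real.norm_eq_abs]
  have hA : ∀ ε : ℝ, Integrable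
      (fun t : ℝ => Complex.exp (-(t:ℂ) ^ 2 / 2) * Complex.exp (Complex.I * (ε:ℂ) * (t:ℂ) ^ 3)) := by
    intro ε
    refine (integ_abs_pow_gauss 0).mono' ?_ ?_
    · exact Continuous.aestronglyMeasurable (by fun_prop)
    · filter_upwards with t
      have h2 : ‖Complex.exp (Complex.I * (ε:ℂ) * (t:ℂ) ^ 3)‖ = 1 := by
        rw [Complex.norm_exp]
        have h3 : Complex.I * (ε:ℂ) * (t:ℂ) ^ 3 = ((ε * t ^ 3 : ℝ) : ℂ) * Complex.I := by
          push_cast; ring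
        rw [h3]
        simp [Complex.mul_re, ← Complex.ofReal_pow]
      rw [norm_mul, hnorm t, h2, mul_one, pow_zero, one_mul]
  have key : ∀ ε : ℝ,
      ((∫ t : ℝ, Complex.exp (-(t:ℂ) ^ 2 / 2) * Complex.exp (Complex.I * (ε:ℂ) * (t:ℂ) ^ 3)) -
          ∑ j ∈ Finset.range N, (Complex.I * (ε:ℂ)) ^ j / (j.factorial : ℂ) *
            ∫ t : ℝ, (t:ℂ) ^ (3 * j) * Complex.exp (-(t:ℂ) ^ 2 / 2))
        = ∫ t : ℝ, Complex.exp (-(t:ℂ) ^ 2 / 2) *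
            (Complex.exp (Complex.I * ((ε * t ^ 3 : ℝ) : ℂ)) -
              ∑ j ∈ Finset.range N,
                (Complex.I * ((ε * t ^ 3 : ℝ) : ℂ)) ^ j / (j.factorial : ℂ)) := by
    intro ε
    have hptw : ∀ t : ℝ, Complex.exp (-(t:ℂ) ^ 2 / 2) *
            (Complex.exp (Complex.I * ((ε * t ^ 3 : ℝ) : ℂ)) -
              ∑ j ∈ Finset.range N,
                (Complex.I * ((ε * t ^ 3 : ℝ) : ℂ)) ^ j / (j.factorial : ℂ))
        = Complex.exp (-(t:ℂ) ^ 2 / 2) * Complex.exp (Complex.I * (ε:ℂ) * (t:ℂ) ^ 3) -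
            ∑ j ∈ Finset.range N, ((Complex.I * (ε:ℂ)) ^ j / (j.factorial : ℂ)) *
              ((t:ℂ) ^ (3 * j) * Complex.exp (-(t:ℂ) ^ 2 / 2)) := by
      intro t
      rw [mul_sub, Finset.mul_sum]
      congr 1
      · congr 2
        push_cast; ring
      · refine Finset.sum_congr rfl fun j _ => ?_
        push_cast; ring
    simp_rw [hptw]
    rw [integral_sub (hA ε)
        (integrable_finset_sum _ fun j _ => ((hgauss j).const_mul _)),
      integral_finset_sum _ fun j _ => ((hgauss j).const_mul _)]
    congr 1
    exact Finset.sum_congr rfl fun j _ => (integral_const_mul _ _).symm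
  rw [isBigO_iff]
  refine ⟨∫ t : ℝ, |t| ^ (3 * N) * Real.exp (-(1/2) * t ^ 2), ?_⟩
  filter_upwards with ε
  rw [key ε]
  have hb : ‖∫ t : ℝ, Complex.exp (-(t:ℂ) ^ 2 / 2) *
      (Complex.exp (Complex.I * ((ε * t ^ 3 : ℝ) : ℂ)) -
        ∑ j ∈ Finset.range N,
          (Complex.I * ((ε * t ^ 3 : ℝ) : ℂ)) ^ j / (j.factorial : ℂ))‖
      ≤ ∫ t : ℝ, (|t| ^ (3 * N) * Real.exp (-(1/2) * t ^ 2)) * |ε| ^ N := by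
    refine norm_integral_le_of_norm_le ((integ_abs_pow_gauss (3 * N)).mul_const _) ?_
    filter_upwards with t
    rw [norm_mul, hnorm t]
    calc Real.exp (-(1/2) * t ^ 2) * ‖Complex.exp (Complex.I * ((ε * t ^ 3 : ℝ) : ℂ)) -
          ∑ j ∈ Finset.range N, (Complex.I * ((ε * t ^ 3 : ℝ) : ℂ)) ^ j / (j.factorial : ℂ)‖
        ≤ Real.exp (-(1/2) * t ^ 2) * |ε * t ^ 3| ^ N :=
          mul_le_mul_of_nonneg_left (taylor_exp_I_bound N (ε * t ^ 3)) (Real.exp_pos _).le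
      _ = (|t| ^ (3 * N) * Real.exp (-(1/2) * t ^ 2)) * |ε| ^ N := by
          rw [abs_mul, abs_pow, mul_pow, pow_mul]; ring
  refine hb.trans ?_
  rw [integral_mul_const, Real.norm_eq_abs, abs_pow, abs_abs]
end

section
/- (Kontsevich's formula for N = 1) For every natural number M, as λ → ∞ along the positive reals, (1/√(2π)) · ∫_{−∞}^{∞} e^{(i/6)·λ^{−3/2}·t³} · e^{−t²/2} dt − Σ_{j=0}^{M−1} (−1)^j · (6j)! / (288^j · (2j)! · (3j)!) · λ^{−3j} = O(λ^{−3M}); that is, the 1×1 Kontsevich matrix integral has asymptotic expansion 𝒜(λ^{−1}) = Σ_{j≥0} (−1)^j (6j)!/(288^j(2j)!(3j)!) λ^{−3j}. -/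
open Filter Asymptotics MeasureTheory Real

lemma exp_I_taylor_nonneg (n : ℕ) : ∀ x : ℝ, 0 ≤ x →
    ‖Complex.exp (Complex.I * x) - ∑ k ∈ Finset.range n, (Complex.I * x) ^ k / k.factorial‖
      ≤ x ^ n / n.factorial := by
  induction n with
  | zero =>
    intro x hx
    have : ‖Complex.exp (Complex.I * x)‖ = 1 := by
      rw [mul_comm]; exact Complex.norm_exp_ofReal_mul_I x
    simp [this]
  | succ n ih =>
    intro x hx
    set F : ℝ → ℂ := fun y =>
      Complex.exp (Complex.I * y) - ∑ k ∈ Finset.range (n+1), (Complex.I * y) ^ k / k.factorial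
      with hFdef
    set D : ℝ → ℂ := fun y =>
      Complex.I * (Complex.exp (Complex.I * y) -
        ∑ k ∈ Finset.range n, (Complex.I * y) ^ k / k.factorial) with hDdef
    have hF0 : F 0 = 0 := by
      simp [hFdef, Finset.sum_range_succ', Complex.exp_zero]
    have hD : ∀ y : ℝ, HasDerivAt F (D y) y := by
      intro y
      have h1' : HasDerivAt (fun y : ℝ => Complex.exp (Complex.I * y))
          (Complex.I * Complex.exp (Complex.I * y)) y := by
        have : HasDerivAt (fun z : ℂ => Complex.exp (Complex.I * z))
            (Complex.exp (Complex.I * y) * (Complex.I * 1)) (y : ℂ) :=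
          ((hasDerivAt_id (y:ℂ)).const_mul Complex.I).cexp
        have := this.comp_ofReal
        simpa [mul_comm] using this
      have h2 : ∀ k : ℕ, HasDerivAt
          (fun y : ℝ => (Complex.I * y) ^ k / k.factorial)
          ((k : ℂ) * (Complex.I * y) ^ (k-1) * Complex.I / k.factorial) y := by
        intro k
        have : HasDerivAt (fun z : ℂ => (Complex.I * z) ^ k / k.factorial)
            ((k : ℂ) * (Complex.I * (y:ℂ)) ^ (k-1) * (Complex.I * 1) / k.factorial) (y : ℂ) :=
          (((hasDerivAt_id (y:ℂ)).const_mul Complex.I).pow k).div_const _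
        simpa using this.comp_ofReal
      have hsum : HasDerivAt
          (fun y : ℝ => ∑ k ∈ Finset.range (n+1), (Complex.I * y) ^ k / k.factorial)
          (∑ k ∈ Finset.range (n+1),
            (k : ℂ) * (Complex.I * y) ^ (k-1) * Complex.I / k.factorial) y :=
        HasDerivAt.fun_sum fun k _ => h2 k
      have heq : (∑ k ∈ Finset.range (n+1),
            (k : ℂ) * (Complex.I * y) ^ (k-1) * Complex.I / k.factorial)
          = Complex.I * ∑ k ∈ Finset.range n, (Complex.I * y) ^ k / k.factorial := by
        rw [Finset.sum_range_succ']
        simp only [Nat.cast_zero, zero_mul, zero_div, add_zero]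
        rw [Finset.mul_sum]
        refine Finset.sum_congr rfl fun k _ => ?_
        have hfac : ((k+1).factorial : ℂ) = ((k:ℂ)+1) * (k.factorial : ℂ) := by
          rw [Nat.factorial_succ]; push_cast; ring
        have hkf : (k.factorial : ℂ) ≠ 0 := by exact_mod_cast k.factorial_ne_zero
        have hk1 : ((k:ℂ)+1) ≠ 0 := Nat.cast_add_one_ne_zero k
        simp only [Nat.add_sub_cancel, Nat.cast_add, Nat.cast_one, hfac]
        field_simp
      have := (h1'.fun_sub hsum)
      rw [heq] at this
      convert this using 1
      rfl
      simp [hDdef, mul_sub]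
    -- FTC
    have hDcont : Continuous D := by
      apply Continuous.mul continuous_const
      apply Continuous.sub
      · exact Complex.continuous_exp.comp (continuous_const.mul Complex.continuous_ofReal)
      · apply continuous_finset_sum
        intro k _
        exact ((continuous_const.mul Complex.continuous_ofReal).pow k).div_const _
    have hFTC : F x - F 0 = ∫ y in (0:ℝ)..x, D y :=
      (intervalIntegral.integral_eq_sub_of_hasDerivAt (fun y _ => hD y)
        (hDcont.intervalIntegrable 0 x)).symm
    have hnorm : ‖F x‖ ≤ ∫ y in (0:ℝ)..x, y ^ n / n.factorial := by
      rw [show F x = ∫ y in (0:ℝ)..x, D y by rw [← hFTC, hF0, sub_zero]]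
      calc ‖∫ y in (0:ℝ)..x, D y‖ ≤ ∫ y in (0:ℝ)..x, ‖D y‖ :=
            intervalIntegral.norm_integral_le_integral_norm hx
        _ ≤ ∫ y in (0:ℝ)..x, y ^ n / n.factorial := by
            apply intervalIntegral.integral_mono_on hx
              ((hDcont.norm).intervalIntegrable 0 x)
              (((continuous_pow n).div_const _).intervalIntegrable 0 x)
            intro y hy
            have hy0 : 0 ≤ y := hy.1
            have : ‖D y‖ = ‖Complex.exp (Complex.I * y) -
                ∑ k ∈ Finset.range n, (Complex.I * y) ^ k / k.factorial‖ := by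
              simp [hDdef, norm_mul, Complex.norm_I]
            rw [this]
            exact ih y hy0
    have hval : (∫ y in (0:ℝ)..x, y ^ n / n.factorial) = x ^ (n+1) / (n+1).factorial := by
      rw [intervalIntegral.integral_div, integral_pow]
      rw [Nat.factorial_succ]
      push_cast
      have h1 : ((n:ℝ)+1) ≠ 0 := by positivity
      have h2 : (n.factorial : ℝ) ≠ 0 := by exact_mod_cast n.factorial_ne_zero
      field_simp
      simp
    calc ‖F x‖ ≤ _ := hnorm
      _ = _ := hval

lemma exp_I_taylor (n : ℕ) (x : ℝ) :
    ‖Complex.exp (Complex.I * x) - ∑ k ∈ Finset.range n, (Complex.I * x) ^ k / k.factorial‖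
      ≤ |x| ^ n / n.factorial := by
  rcases le_or_gt 0 x with hx | hx
  · rw [abs_of_nonneg hx]; exact exp_I_taylor_nonneg n x hx
  · have hy : 0 ≤ -x := by linarith
    have hconj : Complex.exp (Complex.I * x) -
          ∑ k ∈ Finset.range n, (Complex.I * x) ^ k / k.factorial
        = (starRingEnd ℂ) (Complex.exp (Complex.I * (-x:ℝ)) -
          ∑ k ∈ Finset.range n, (Complex.I * (-x:ℝ)) ^ k / k.factorial) := by
      rw [map_sub, ← Complex.exp_conj, map_sum]
      congr 1
      · congr 1
        simp [Complex.conj_I]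
      · refine Finset.sum_congr rfl fun k _ => ?_
        rw [map_div₀, map_pow, map_mul, Complex.conj_I, Complex.conj_ofReal]
        push_cast
        norm_num
    rw [hconj, RCLike.norm_conj, abs_of_neg hx]
    exact exp_I_taylor_nonneg n (-x) hy


lemma Gamma_half (n : ℕ) : Real.Gamma (n + 1/2) =
    Real.sqrt π * (2*n).factorial / (4^n * n.factorial) := by
  induction n with
  | zero => simpa using Real.Gamma_one_half_eq
  | succ n ih =>
    have hne : ((n:ℝ) + 1/2) ≠ 0 := by positivity
    have : ((n+1 : ℕ) : ℝ) + 1/2 = ((n:ℝ) + 1/2) + 1 := by push_cast; ring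
    rw [this, Real.Gamma_add_one hne, ih]
    have h1 : ((2*(n+1)).factorial : ℝ) = (2*n+2) * (2*n+1) * (2*n).factorial := by
      have : 2*(n+1) = (2*n+1) + 1 := by ring
      rw [this, Nat.factorial_succ, Nat.factorial_succ]
      push_cast; ring
    have h2 : ((n+1).factorial : ℝ) = (n+1) * n.factorial := by
      rw [Nat.factorial_succ]; push_cast; ring
    rw [h1, h2]
    have h3 : (n.factorial : ℝ) ≠ 0 := by exact_mod_cast n.factorial_ne_zero
    have h4 : (4:ℝ)^n ≠ 0 := by positivity
    field_simp
    ring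

lemma integrable_pow_gauss (m : ℕ) :
    Integrable (fun t : ℝ => t ^ m * Real.exp (-t^2/2)) := by
  have h := integrable_rpow_mul_exp_neg_mul_sq (b := 1/2) (by norm_num)
    (s := (m : ℝ)) (lt_of_lt_of_le neg_one_lt_zero (Nat.cast_nonneg m))
  have : (fun t : ℝ => t ^ (m:ℝ) * Real.exp (-(1/2) * t^2))
      = fun t : ℝ => t ^ m * Real.exp (-t^2/2) := by
    funext t; rw [Real.rpow_natCast]; ring_nf
  rwa [this] at h

lemma moment_odd (m : ℕ) (hm : Odd m) :
    ∫ t : ℝ, t ^ m * Real.exp (-t^2/2) = 0 := by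
  have h := integral_neg_eq_self (fun t : ℝ => t ^ m * Real.exp (-t^2/2)) volume
  have h2 : (fun x : ℝ => (-x) ^ m * Real.exp (-(-x)^2/2))
      = fun x : ℝ => -(x ^ m * Real.exp (-x^2/2)) := by
    funext x; rw [hm.neg_pow, neg_sq]; ring
  rw [h2, integral_neg] at h
  linarith [h]

lemma moment_even (n : ℕ) :
    ∫ t : ℝ, t ^ (2*n) * Real.exp (-t^2/2)
      = Real.sqrt (2*π) * (2*n).factorial / (2^n * n.factorial) := by
  set f : ℝ → ℝ := fun t => t ^ (2*n) * Real.exp (-t^2/2) with hf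
  have hint := integrable_pow_gauss (2*n)
  have hsplit : ∫ t, f t = (∫ t in Set.Iic 0, f t) + ∫ t in Set.Ioi 0, f t :=
    (intervalIntegral.integral_Iic_add_Ioi hint.integrableOn hint.integrableOn).symm
  have heven : (∫ t in Set.Iic 0, f t) = ∫ t in Set.Ioi 0, f t := by
    have h := integral_comp_neg_Ioi (c := 0) (f := f)
    rw [neg_zero] at h
    rw [← h]
    refine setIntegral_congr_fun measurableSet_Ioi fun x _ => ?_
    simp [hf, neg_sq, pow_mul]
  have hIoi : (∫ t in Set.Ioi 0, f t)
      = (1/2:ℝ) ^ (-(((2*n:ℕ):ℝ) + 1) / 2) * (1 / 2) * Real.Gamma ((((2*n:ℕ):ℝ) + 1) / 2) := by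
    rw [← integral_rpow_mul_exp_neg_mul_rpow (p := 2) (q := ((2*n:ℕ):ℝ)) (b := 1/2)
      (by norm_num) (lt_of_lt_of_le neg_one_lt_zero (Nat.cast_nonneg _)) (by norm_num)]
    refine setIntegral_congr_fun measurableSet_Ioi fun x hx => ?_
    have hx0 : (0:ℝ) ≤ x := le_of_lt hx
    rw [Real.rpow_natCast, Real.rpow_two]
    simp only [hf]
    ring_nf
  have hG : Real.Gamma ((((2*n:ℕ):ℝ) + 1) / 2) = Real.sqrt π * (2*n).factorial / (4^n * n.factorial) := by
    rw [show (((2*n:ℕ):ℝ) + 1) / 2 = (n:ℝ) + 1/2 by push_cast; ring]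
    exact Gamma_half n
  have hpow : (1/2:ℝ) ^ (-(((2*n:ℕ):ℝ) + 1) / 2) = 2 ^ n * Real.sqrt 2 := by
    rw [one_div, Real.inv_rpow (by norm_num), ← Real.rpow_neg (by norm_num), neg_div, neg_neg]
    rw [show (((2*n:ℕ):ℝ) + 1) / 2 = (n:ℝ) + 1/2 by push_cast; ring,
      Real.rpow_add (by norm_num), Real.rpow_natCast]
    rw [← Real.sqrt_eq_rpow]
  rw [hsplit, heven, hIoi, hG, hpow]
  have h3 : (n.factorial : ℝ) ≠ 0 := by exact_mod_cast n.factorial_ne_zero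
  have h4 : (2:ℝ)^n ≠ 0 := by positivity
  have hsq : Real.sqrt (2*π) = Real.sqrt 2 * Real.sqrt π := Real.sqrt_mul (by norm_num) _
  have h44 : (4:ℝ)^n = (2:ℝ)^n * 2^n := by rw [← mul_pow]; norm_num
  rw [hsq, h44]
  field_simp
  ring

lemma sum_range_two_mul' {α} [AddCommMonoid α] (M : ℕ) (h : ℕ → α) :
    ∑ k ∈ Finset.range (2*M), h k = ∑ j ∈ Finset.range M, (h (2*j) + h (2*j+1)) := by
  induction M with
  | zero => simp
  | succ m ih =>
    rw [Finset.sum_range_succ, ← ih, show 2*(m+1) = (2*m+1)+1 by ring,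
      Finset.sum_range_succ, Finset.sum_range_succ]
    abel

lemma monomial_cgauss_eq (m : ℕ) :
    (fun t : ℝ => (t:ℂ)^m * Complex.exp (-(t:ℂ)^2/2))
      = fun t : ℝ => ((t^m * Real.exp (-t^2/2) : ℝ) : ℂ) := by
  funext t
  push_cast [Complex.ofReal_exp]
  norm_num

lemma integrable_monomial_cgauss (m : ℕ) :
    Integrable (fun t : ℝ => (t:ℂ)^m * Complex.exp (-(t:ℂ)^2/2)) := by
  rw [monomial_cgauss_eq]
  exact (integrable_pow_gauss m).ofReal

lemma momC (m : ℕ) :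
    (∫ t : ℝ, (t:ℂ)^m * Complex.exp (-(t:ℂ)^2/2))
      = ((∫ t : ℝ, t^m * Real.exp (-t^2/2) : ℝ) : ℂ) := by
  rw [monomial_cgauss_eq]
  exact integral_ofReal

lemma cgauss_norm (t : ℝ) : ‖Complex.exp (-(t:ℂ)^2/2)‖ = Real.exp (-t^2/2) := by
  have : (-(t:ℂ)^2/2) = ((-t^2/2 : ℝ) : ℂ) := by push_cast; ring
  rw [this, Complex.norm_exp_ofReal]

lemma key_s12 (M : ℕ) (ε : ℝ) (hε : 0 ≤ ε) :
    ‖(∫ t : ℝ, Complex.exp (Complex.I * ((ε * t^3/6 : ℝ):ℂ)) * Complex.exp (-(t:ℂ)^2/2))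
      - (Real.sqrt (2*π) : ℂ) * ∑ j ∈ Finset.range M,
        ((-1)^j * ((6*j).factorial : ℂ) / (288^j * (2*j).factorial * (3*j).factorial) * (ε:ℂ)^(2*j))‖
    ≤ (∫ t : ℝ, t^(6*M) * Real.exp (-t^2/2)) / (6^(2*M) * (2*M).factorial) * ε^(2*M) := by
  set f : ℝ → ℂ := fun t =>
    Complex.exp (Complex.I * ((ε * t^3/6 : ℝ):ℂ)) * Complex.exp (-(t:ℂ)^2/2) with hfdef
  set g : ℝ → ℂ := fun t => ∑ k ∈ Finset.range (2*M),
    ((Complex.I * ε / 6)^k / k.factorial) * ((t:ℂ)^(3*k) * Complex.exp (-(t:ℂ)^2/2)) with hgdef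
  -- g rewritten
  have hg : ∀ t : ℝ, g t =
      (∑ k ∈ Finset.range (2*M), (Complex.I * ((ε * t^3/6 : ℝ):ℂ))^k / k.factorial)
        * Complex.exp (-(t:ℂ)^2/2) := by
    intro t
    rw [hgdef, Finset.sum_mul]
    refine Finset.sum_congr rfl fun k _ => ?_
    have h1 : (Complex.I * ((ε * t^3/6 : ℝ):ℂ))^k
        = (Complex.I * ε / 6)^k * ((t:ℂ)^3)^k := by
      rw [← mul_pow]; push_cast; ring_nf
    rw [h1, ← pow_mul]
    ring
  -- integrability
  have hgauss : Integrable (fun t : ℝ => Real.exp (-t^2/2)) := by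
    simpa using integrable_pow_gauss 0
  have hf_int : Integrable f := by
    refine hgauss.mono' ?_ ?_
    · apply Continuous.aestronglyMeasurable
      apply Continuous.mul
      · exact Complex.continuous_exp.comp (continuous_const.mul
          (Complex.continuous_ofReal.comp (by fun_prop)))
      · exact Complex.continuous_exp.comp (by fun_prop)
    · refine Filter.Eventually.of_forall fun t => ?_
      rw [hfdef]
      simp only [norm_mul]
      rw [cgauss_norm]
      have h1 : ‖Complex.exp (Complex.I * ((ε * t^3/6 : ℝ):ℂ))‖ = 1 := by
        rw [mul_comm]
        exact Complex.norm_exp_ofReal_mul_I _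
      rw [h1, one_mul]
  have hg_int : Integrable g := by
    apply integrable_finset_sum
    intro k _
    exact (integrable_monomial_cgauss (3*k)).const_mul _
  -- step A : remainder bound
  have hbound : ∀ t : ℝ, ‖f t - g t‖
      ≤ (ε^(2*M) / (6^(2*M) * (2*M).factorial)) * (t^(6*M) * Real.exp (-t^2/2)) := by
    intro t
    rw [hg t, hfdef]
    have : Complex.exp (Complex.I * ((ε * t^3/6 : ℝ):ℂ)) * Complex.exp (-(t:ℂ)^2/2)
        - (∑ k ∈ Finset.range (2*M), (Complex.I * ((ε * t^3/6 : ℝ):ℂ))^k / k.factorial)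
            * Complex.exp (-(t:ℂ)^2/2)
        = (Complex.exp (Complex.I * ((ε * t^3/6 : ℝ):ℂ))
            - ∑ k ∈ Finset.range (2*M), (Complex.I * ((ε * t^3/6 : ℝ):ℂ))^k / k.factorial)
            * Complex.exp (-(t:ℂ)^2/2) := by ring
    rw [this, norm_mul, cgauss_norm]
    have htay := exp_I_taylor (2*M) (ε * t^3/6)
    have habs : |ε * t^3/6| ^ (2*M) = ε^(2*M) * t^(6*M) / 6^(2*M) := by
      rw [(even_two_mul M).pow_abs, div_pow, mul_pow, ← pow_mul,
        show 3*(2*M) = 6*M by ring]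
    calc ‖_‖ * Real.exp (-t^2/2) ≤ (|ε * t^3/6| ^ (2*M) / (2*M).factorial) * Real.exp (-t^2/2) := by
          apply mul_le_mul_of_nonneg_right htay (Real.exp_nonneg _)
      _ = (ε^(2*M) / (6^(2*M) * (2*M).factorial)) * (t^(6*M) * Real.exp (-t^2/2)) := by
          rw [habs]; ring
  -- value of ∫ g
  have hgval : (∫ t : ℝ, g t) = (Real.sqrt (2*π) : ℂ) * ∑ j ∈ Finset.range M,
      ((-1)^j * ((6*j).factorial : ℂ) / (288^j * (2*j).factorial * (3*j).factorial)
        * (ε:ℂ)^(2*j)) := by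
    rw [hgdef]
    rw [integral_finset_sum _ (fun k _ => (integrable_monomial_cgauss (3*k)).const_mul _)]
    have hterm : ∀ k : ℕ,
        (∫ t : ℝ, ((Complex.I * ε / 6)^k / k.factorial)
            * ((t:ℂ)^(3*k) * Complex.exp (-(t:ℂ)^2/2)))
          = ((Complex.I * ε / 6)^k / k.factorial)
            * ((∫ t : ℝ, t^(3*k) * Real.exp (-t^2/2) : ℝ) : ℂ) := by
      intro k
      rw [integral_const_mul, momC]
    rw [Finset.sum_congr rfl fun k _ => hterm k, sum_range_two_mul', Finset.mul_sum]
    refine Finset.sum_congr rfl fun j _ => ?_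
    have hodd : (∫ t : ℝ, t^(3*(2*j+1)) * Real.exp (-t^2/2)) = 0 :=
      moment_odd _ ⟨3*j+1, by ring⟩
    have heven' : (∫ t : ℝ, t^(3*(2*j)) * Real.exp (-t^2/2))
        = Real.sqrt (2*π) * ((6*j).factorial : ℝ) / (2^(3*j) * ((3*j).factorial : ℝ)) := by
      rw [show 3*(2*j) = 2*(3*j) by ring, moment_even (3*j), show 2*(3*j) = 6*j by ring]
    rw [hodd, heven']
    have hI : (Complex.I * ε / 6)^(2*j) = (-1:ℂ)^j * (ε:ℂ)^(2*j) / 36^j := by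
      rw [pow_mul]
      have h2 : (Complex.I * ε / 6)^2 = -((ε:ℂ)^2/36) := by
        rw [div_pow, mul_pow, Complex.I_sq]; ring
      rw [h2, neg_pow, div_pow, ← pow_mul]
      ring
    rw [hI]
    have e1 : ((2*j).factorial : ℂ) ≠ 0 := Nat.cast_ne_zero.mpr (Nat.factorial_ne_zero _)
    have e2 : ((3*j).factorial : ℂ) ≠ 0 := Nat.cast_ne_zero.mpr (Nat.factorial_ne_zero _)
    have e3 : (36:ℂ)^j ≠ 0 := pow_ne_zero _ (by norm_num)
    have e4 : (2:ℂ)^(3*j) ≠ 0 := pow_ne_zero _ (by norm_num)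
    have e5 : (288:ℂ)^j = 36^j * 2^(3*j) := by
      rw [pow_mul, show ((2:ℂ)^3) = 8 by norm_num, ← mul_pow]; norm_num
    push_cast
    rw [e5]
    field_simp
    ring
  -- conclusion
  have hIb : Integrable (fun t : ℝ =>
      (ε^(2*M) / (6^(2*M) * (2*M).factorial)) * (t^(6*M) * Real.exp (-t^2/2))) :=
    (integrable_pow_gauss (6*M)).const_mul _
  calc ‖(∫ t : ℝ, f t) - (Real.sqrt (2*π) : ℂ) * ∑ j ∈ Finset.range M,
        ((-1)^j * ((6*j).factorial : ℂ) / (288^j * (2*j).factorial * (3*j).factorial)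
          * (ε:ℂ)^(2*j))‖
      = ‖∫ t : ℝ, (f t - g t)‖ := by
        rw [← hgval, integral_sub hf_int hg_int]
    _ ≤ ∫ t : ℝ, (ε^(2*M) / (6^(2*M) * (2*M).factorial)) * (t^(6*M) * Real.exp (-t^2/2)) :=
        norm_integral_le_of_norm_le hIb (Filter.Eventually.of_forall hbound)
    _ = (ε^(2*M) / (6^(2*M) * (2*M).factorial)) * ∫ t : ℝ, t^(6*M) * Real.exp (-t^2/2) :=
        integral_const_mul _ _
    _ = (∫ t : ℝ, t^(6*M) * Real.exp (-t^2/2)) / (6^(2*M) * (2*M).factorial) * ε^(2*M) := by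
        ring


theorem kontsevich_N1_expansion (M : ℕ) :
    (fun lam : ℝ =>
        (1 / Real.sqrt (2 * π) : ℂ) *
          (∫ t : ℝ, Complex.exp (Complex.I / 6 * ((lam ^ (-(3:ℝ)/2) : ℝ) : ℂ) * (t:ℂ) ^ 3) *
            Complex.exp (-(t:ℂ) ^ 2 / 2)) -
          ∑ j ∈ Finset.range M, ((-1) ^ j * ((6 * j).factorial : ℂ) /
            (288 ^ j * (2 * j).factorial * (3 * j).factorial) * ((lam : ℂ) ^ (3 * j))⁻¹))
      =O[atTop]
    (fun lam : ℝ => lam ^ (-(3 * (M:ℝ)))) := by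
  rw [Asymptotics.isBigO_iff]
  refine ⟨(1 / Real.sqrt (2*π)) *
    ((∫ t : ℝ, t^(6*M) * Real.exp (-t^2/2)) / (6^(2*M) * (2*M).factorial)), ?_⟩
  filter_upwards [Filter.eventually_ge_atTop 1] with lam hlam
  have hlam0 : (0:ℝ) < lam := lt_of_lt_of_le one_pos hlam
  set ε : ℝ := lam ^ (-(3:ℝ)/2) with hε
  have hε0 : 0 ≤ ε := Real.rpow_nonneg hlam0.le _
  have hpow : ∀ j : ℕ, ε ^ (2*j) = (lam ^ (3*j))⁻¹ := by
    intro j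
    rw [hε, ← Real.rpow_natCast (lam ^ (-(3:ℝ)/2)) (2*j), ← Real.rpow_mul hlam0.le,
      ← Real.rpow_natCast lam (3*j), ← Real.rpow_neg hlam0.le]
    congr 1
    push_cast
    ring
  have h2pi : (0:ℝ) < Real.sqrt (2*π) := Real.sqrt_pos.mpr (by positivity)
  have ha : ((Real.sqrt (2*π) : ℝ) : ℂ) ≠ 0 := Complex.ofReal_ne_zero.mpr h2pi.ne'
  have hint_eq : (∫ t : ℝ, Complex.exp (Complex.I / 6 * ((ε : ℝ) : ℂ) * (t:ℂ)^3) *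
        Complex.exp (-(t:ℂ)^2/2))
      = ∫ t : ℝ, Complex.exp (Complex.I * ((ε * t^3/6 : ℝ):ℂ)) * Complex.exp (-(t:ℂ)^2/2) := by
    congr 1
    funext t
    rw [show Complex.I / 6 * ((ε : ℝ) : ℂ) * (t:ℂ)^3
      = Complex.I * ((ε * t^3/6 : ℝ):ℂ) from by push_cast; ring]
  have hsum_eq : (∑ j ∈ Finset.range M, ((-1)^j * ((6*j).factorial : ℂ) /
        (288^j * (2*j).factorial * (3*j).factorial) * ((lam:ℂ)^(3*j))⁻¹))
      = ∑ j ∈ Finset.range M, ((-1)^j * ((6*j).factorial : ℂ) /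
        (288^j * (2*j).factorial * (3*j).factorial) * (ε:ℂ)^(2*j)) := by
    refine Finset.sum_congr rfl fun j _ => ?_
    congr 1
    have := hpow j
    rw [show ((ε:ℂ))^(2*j) = ((ε^(2*j) : ℝ) : ℂ) from by push_cast; ring, this]
    push_cast
    ring
  have hrhs : lam ^ (-(3 * (M:ℝ))) = ε ^ (2*M) := by
    rw [hpow M, ← Real.rpow_natCast lam (3*M), ← Real.rpow_neg hlam0.le]
    congr 1
    push_cast
    ring
  rw [hint_eq, hsum_eq]
  have lhs_eq : (1 / Real.sqrt (2*π) : ℂ) *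
        (∫ t : ℝ, Complex.exp (Complex.I * ((ε * t^3/6 : ℝ):ℂ)) * Complex.exp (-(t:ℂ)^2/2))
      - ∑ j ∈ Finset.range M, ((-1)^j * ((6*j).factorial : ℂ) /
          (288^j * (2*j).factorial * (3*j).factorial) * (ε:ℂ)^(2*j))
      = (1 / Real.sqrt (2*π) : ℂ) *
        ((∫ t : ℝ, Complex.exp (Complex.I * ((ε * t^3/6 : ℝ):ℂ)) * Complex.exp (-(t:ℂ)^2/2))
          - (Real.sqrt (2*π) : ℂ) * ∑ j ∈ Finset.range M, ((-1)^j * ((6*j).factorial : ℂ) /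
              (288^j * (2*j).factorial * (3*j).factorial) * (ε:ℂ)^(2*j))) := by
    rw [mul_sub]
    congr 1
    rw [one_div, inv_mul_cancel_left₀ ha]
  rw [lhs_eq, norm_mul]
  have hnorm1 : ‖(1 / Real.sqrt (2*π) : ℂ)‖ = 1 / Real.sqrt (2*π) := by
    rw [norm_div, norm_one, Complex.norm_real, Real.norm_eq_abs, abs_of_pos h2pi]
  rw [hnorm1, Real.norm_eq_abs, abs_of_nonneg (Real.rpow_nonneg hlam0.le _), hrhs,
    mul_assoc]
  exact mul_le_mul_of_nonneg_left (key_s12 M ε hε0) (by positivity)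
end

section
/- In ℚ[[x]], let G(x) = Σ_{j≥0} (6j)!/(288^j (2j)!(3j)!) x^{3j} (that is, G(x) = 𝒜(−x)). Then there is a unique formal power series C(x) ∈ ℚ[[x]] satisfying −x⁴·C'(x) − (3/2)·x³·C(x) + C(x) = G(x), and it is given by C(x) = 1 + Σ_{n≥1} d_n x^{3n}, where d_n = Σ_{i=0}^{n} 3^i · (6(n−i))!/(288^{n−i}·(2(n−i))!·(3(n−i))!) · Π_{k=1}^{i} (n + 1/2 − k). -/
open PowerSeries

/-- The coefficient `(6j)!/(288^j (2j)! (3j)!)` of `x^{3j}` in `G(x) = 𝒜(−x)`. -/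
noncomputable def gCoeff (j : ℕ) : ℚ :=
  ((6 * j).factorial : ℚ) / (288 ^ j * (2 * j).factorial * (3 * j).factorial)

/-- `G(x) = Σ_{j≥0} (6j)!/(288^j (2j)!(3j)!) x^{3j}` as a formal power series over ℚ. -/
noncomputable def Gser : PowerSeries ℚ :=
  PowerSeries.mk fun n => if 3 ∣ n then gCoeff (n / 3) else 0

/-- `d_n = Σ_{i=0}^{n} 3^i · g_{n−i} · Π_{k=1}^{i} (n + 1/2 − k)`. -/
noncomputable def dCoeff (n : ℕ) : ℚ :=
  ∑ i ∈ Finset.range (n + 1), 3 ^ i * gCoeff (n - i) *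
    ∏ k ∈ Finset.range i, ((n : ℚ) + 1 / 2 - (k + 1))

/-- `D(x) = 1 + Σ_{n≥1} d_n x^{3n}` as a formal power series over ℚ. -/
noncomputable def Dser : PowerSeries ℚ :=
  PowerSeries.mk fun n => if 3 ∣ n then dCoeff (n / 3) else 0

/-- The ODE is equivalent to a coefficient recursion. -/
lemma eqn_iff (f : PowerSeries ℚ) :
    (-X ^ 4 * PowerSeries.derivative ℚ f - C (3 / 2 : ℚ) * X ^ 3 * f + f = Gser) ↔
    ∀ n : ℕ, coeff n f = coeff n Gser +
      (if 3 ≤ n then ((n : ℚ) - 3 / 2) * coeff (n - 3) f else 0) := by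
  rw [PowerSeries.ext_iff]
  apply forall_congr'
  intro n
  rw [map_add, map_sub, neg_mul, map_neg, mul_assoc, PowerSeries.coeff_C_mul,
    PowerSeries.coeff_X_pow_mul', PowerSeries.coeff_X_pow_mul',
    PowerSeries.coeff_derivative]
  by_cases h4 : 4 ≤ n
  · have h3 : 3 ≤ n := by omega
    rw [if_pos h4, if_pos h3, if_pos h3]
    have hn : n - 4 + 1 = n - 3 := by omega
    have hc : ((n - 4 : ℕ) : ℚ) + 1 = (n : ℚ) - 3 := by
      have : ((n - 4 : ℕ) : ℚ) = (n : ℚ) - 4 := by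
        push_cast [h4]; ring
      rw [this]; ring
    rw [hn, hc]
    constructor <;> intro h <;> linear_combination h
  · by_cases h3 : 3 ≤ n
    · have hn : n = 3 := by omega
      subst hn
      norm_num
      constructor <;> intro h <;> linear_combination h
    · rw [if_neg h4, if_neg h3, if_neg h3]
      constructor <;> intro h <;> linear_combination h

lemma dRec (m : ℕ) :
    dCoeff (m + 1) = gCoeff (m + 1) + (3 * (m : ℚ) + 3 / 2) * dCoeff m := by
  unfold dCoeff
  rw [Finset.sum_range_succ']
  simp only [pow_zero, Nat.sub_zero, Finset.range_zero, Finset.prod_empty, one_mul, mul_one]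
  rw [add_comm, Finset.mul_sum]
  congr 1
  apply Finset.sum_congr rfl
  intro i _
  rw [Finset.prod_range_succ']
  have hsub : m + 1 - (i + 1) = m - i := by omega
  have hprod : (∏ k ∈ Finset.range i, (((m + 1 : ℕ) : ℚ) + 1 / 2 - (((k + 1 : ℕ) : ℚ) + 1)))
      = ∏ k ∈ Finset.range i, ((m : ℚ) + 1 / 2 - ((k : ℚ) + 1)) :=
    Finset.prod_congr rfl fun k _ => by push_cast; ring
  rw [hsub, hprod]
  push_cast
  ring

lemma D_satisfies : ∀ n : ℕ, coeff n Dser = coeff n Gser +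
    (if 3 ≤ n then ((n : ℚ) - 3 / 2) * coeff (n - 3) Dser else 0) := by
  intro n
  simp only [Dser, Gser, coeff_mk]
  by_cases hd : 3 ∣ n
  · obtain ⟨m, rfl⟩ := hd
    rw [if_pos ⟨m, rfl⟩, if_pos ⟨m, rfl⟩]
    rcases m with _ | q
    · simp [dCoeff]
    · have h3 : 3 ≤ 3 * (q + 1) := by omega
      rw [if_pos h3]
      have h1 : 3 * (q + 1) - 3 = 3 * q := by omega
      have h2 : 3 * (q + 1) / 3 = q + 1 := by omega
      rw [h1, h2, if_pos ⟨q, rfl⟩, Nat.mul_div_cancel_left q (by norm_num)]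
      rw [dRec q]
      have : ((3 * (q + 1) : ℕ) : ℚ) - 3 / 2 = 3 * (q : ℚ) + 3 / 2 := by push_cast; ring
      rw [this]
  · rw [if_neg hd, if_neg hd]
    by_cases h3 : 3 ≤ n
    · have hd' : ¬ 3 ∣ (n - 3) := by omega
      rw [if_pos h3, if_neg hd', mul_zero, add_zero]
    · rw [if_neg h3, add_zero]

theorem D_unique_solution :
    (-X ^ 4 * PowerSeries.derivative ℚ Dser - C (3 / 2 : ℚ) * X ^ 3 * Dser + Dser = Gser) ∧
    ∀ f : PowerSeries ℚ,
      (-X ^ 4 * PowerSeries.derivative ℚ f - C (3 / 2 : ℚ) * X ^ 3 * f + f = Gser) → f = Dser := by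
  constructor
  · exact (eqn_iff Dser).mpr D_satisfies
  · intro f hf
    rw [eqn_iff] at hf
    ext n
    induction n using Nat.strong_induction_on with
    | _ n ih =>
      rw [hf n, D_satisfies n]
      by_cases h3 : 3 ≤ n
      · rw [if_pos h3, if_pos h3, ih (n - 3) (by omega)]
      · rw [if_neg h3, if_neg h3]
end
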